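/- arXiv:1210.5322 — 4 statements merged into one kernel-verified Lean document; each statement's English description precedes it below -/
import Mathlib

section
/- Let G be a finite simple graph and let C be a Clar cover of G with exactly n hexagon components. Then the subgraph of the resonance graph R(G) induced by the set V(C) is isomorphic to the n-cube Q_n. In particular V(C) has exactly 2^n elements. -/
open SimpleGraph Polynomial

/-- The `n`-cube `Q_n`: vertices are the functions `Fin n → Bool`, two functions
being adjacent iff they differ in exactly one coordinate. -/
def cubeGraph (n : ℕ) : SimpleGraph (Fin n → Bool) where
  Adj f g := ∃! i, f i ≠ g i
  symm := by
    constructor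
    rintro f g ⟨i, hi, hu⟩
    exact ⟨i, hi.symm, fun j hj => hu j hj.symm⟩
  loopless := by
    constructor
    rintro f ⟨i, hi, -⟩
    exact hi rfl

/-- A perfect matching of `G`, given as a set of edges: a set of pairwise
disjoint edges of `G` covering every vertex, i.e. every vertex of `G` lies in
exactly one edge of `M`. -/
def IsPMSet {V : Type*} (G : SimpleGraph V) (M : Set (Sym2 V)) : Prop :=
  M ⊆ G.edgeSet ∧ ∀ v : V, ∃! e, e ∈ M ∧ v ∈ e

/-- `f : Fin 6 → V` traces a 6-cycle of `G`. -/
def IsHexCycle {V : Type*} (G : SimpleGraph V) (f : Fin 6 → V) : Prop :=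
  Function.Injective f ∧ ∀ i : Fin 6, G.Adj (f i) (f (i + 1))

/-- The edge set of the 6-cycle traced by `f`. -/
def hexEdges {V : Type*} (f : Fin 6 → V) : Set (Sym2 V) :=
  {e | ∃ i : Fin 6, e = s(f i, f (i + 1))}

/-- `E` is the edge set of some 6-cycle of `G`. -/
def IsHexagon {V : Type*} (G : SimpleGraph V) (E : Set (Sym2 V)) : Prop :=
  ∃ f : Fin 6 → V, IsHexCycle G f ∧ E = hexEdges f

lemma IsHexagon.nonempty {V : Type*} {G : SimpleGraph V} {E : Set (Sym2 V)}
    (h : IsHexagon G E) : E.Nonempty := by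
  obtain ⟨f, -, rfl⟩ := h
  exact ⟨s(f 0, f 1), 0, rfl⟩

/-- The resonance graph of `G`: its vertices are the perfect matchings of `G`,
two matchings being adjacent iff their symmetric difference is the edge set of
a 6-cycle of `G`. -/
def resonanceGraph {V : Type*} (G : SimpleGraph V) :
    SimpleGraph {M : Set (Sym2 V) // IsPMSet G M} where
  Adj M N := IsHexagon G (symmDiff M.1 N.1)
  symm := by
    constructor
    intro M N h
    rwa [symmDiff_comm]
  loopless := by
    constructor
    intro M h
    have := h.nonempty
    rw [symmDiff_self] at this
    exact Set.not_nonempty_empty this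

/-- The edge set of a connected component `c` of `H`: all edges of `H` both of
whose endpoints lie in `c`. -/
def compEdges {V : Type*} (H : SimpleGraph V) (c : H.ConnectedComponent) : Set (Sym2 V) :=
  {e | e ∈ H.edgeSet ∧ ∀ v ∈ e, v ∈ c.supp}

/-- The component `c` of `H` is a hexagon, i.e. a cycle of length six. -/
def IsHexComp {V : Type*} (H : SimpleGraph V) (c : H.ConnectedComponent) : Prop :=
  Nonempty (H.induce c.supp ≃g cycleGraph 6)

/-- The component `c` of `H` is a single edge (a copy of `K₂`). -/
def IsEdgeComp {V : Type*} (H : SimpleGraph V) (c : H.ConnectedComponent) : Prop :=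
  Nonempty (H.induce c.supp ≃g (⊤ : SimpleGraph (Fin 2)))

/-- `H` is a Clar cover of `G`: a spanning subgraph of `G` each of whose
connected components is either a 6-cycle (called a hexagon of the cover) or a
single edge. -/
def IsClarCover {V : Type*} (G H : SimpleGraph V) : Prop :=
  H ≤ G ∧ ∀ c : H.ConnectedComponent, IsHexComp H c ∨ IsEdgeComp H c

/-- For a Clar cover `H` of `G`, the set `V(C)` of perfect matchings `M` of `G`
such that every hexagon `h` of `H` is `M`-alternating (i.e. `M ∩ E(h)` is a
perfect matching of the 6-cycle `h`) and every single-edge component of `H` is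
contained in `M`. -/
def clarVC {V : Type*} (G H : SimpleGraph V) : Set {M : Set (Sym2 V) // IsPMSet G M} :=
  {M | (∀ c : H.ConnectedComponent, IsHexComp H c →
          ∀ v ∈ c.supp, ∃! e, e ∈ M.1 ∩ compEdges H c ∧ v ∈ e) ∧
       (∀ c : H.ConnectedComponent, IsEdgeComp H c → compEdges H c ⊆ M.1)}

/-- The number of hexagon components of `H`. -/
noncomputable def hexCount {V : Type*} (H : SimpleGraph V) : ℕ :=
  Nat.card {c : H.ConnectedComponent // IsHexComp H c}
namespace ClarAux

variable {V : Type*}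

/-- Parity of an index in `Fin 6`. -/
def par (i : Fin 6) : Bool := decide (i.val % 2 = 1)

/-- One of the two perfect matchings of the hexagon traced by `f`. -/
def hexM (f : Fin 6 → V) (b : Bool) : Set (Sym2 V) :=
  {e | ∃ i : Fin 6, par i = b ∧ e = s(f i, f (i + 1))}

lemma hexM_subset (f : Fin 6 → V) (b : Bool) : hexM f b ⊆ hexEdges f := by
  rintro e ⟨i, -, he⟩
  exact ⟨i, he⟩

lemma hexEdge_eq_iff {f : Fin 6 → V} (hf : Function.Injective f) {i j : Fin 6} :
    s(f i, f (i + 1)) = s(f j, f (j + 1)) ↔ i = j := by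
  constructor
  · intro h
    rw [Sym2.eq_iff] at h
    rcases h with ⟨h1, _⟩ | ⟨h1, h2⟩
    · exact hf h1
    · have hi : i = j + 1 := hf h1
      have hj : j = i + 1 := hf h2.symm
      rw [hj, add_assoc] at hi
      exact absurd (left_eq_add.mp hi) (by decide)
  · rintro rfl; rfl

lemma mem_hexEdge {f : Fin 6 → V} (hf : Function.Injective f) {j i : Fin 6} :
    f j ∈ s(f i, f (i + 1)) ↔ j = i ∨ j = i + 1 := by
  rw [Sym2.mem_iff]
  exact or_congr hf.eq_iff hf.eq_iff

private lemma key1 : ∀ (b : Bool) (j : Fin 6), ∃ i : Fin 6,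
    (par i = b ∧ (j = i ∨ j = i + 1)) ∧
      ∀ i' : Fin 6, (par i' = b ∧ (j = i' ∨ j = i' + 1)) → i' = i := by decide

private lemma key2 : ∀ t : Fin 6 → Bool,
    (∀ j : Fin 6, ∃ i : Fin 6, (t i = true ∧ (j = i ∨ j = i + 1)) ∧
      ∀ i' : Fin 6, (t i' = true ∧ (j = i' ∨ j = i' + 1)) → i' = i) →
    (∀ i, t i = par i) ∨ (∀ i, t i = !par i) := by decide

lemma hexM_cover {f : Fin 6 → V} (hf : Function.Injective f) (b : Bool) (j : Fin 6) :
    ∃! e, e ∈ hexM f b ∧ f j ∈ e := by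
  obtain ⟨i, ⟨hp, hj⟩, hu⟩ := key1 b j
  refine ⟨s(f i, f (i + 1)), ⟨⟨i, hp, rfl⟩, (mem_hexEdge hf).2 hj⟩, ?_⟩
  rintro e ⟨⟨i', hp', rfl⟩, hm⟩
  have : i' = i := hu i' ⟨hp', (mem_hexEdge hf).1 hm⟩
  rw [this]

lemma hexEdges_eq_union (f : Fin 6 → V) : hexEdges f = hexM f false ∪ hexM f true := by
  ext e
  constructor
  · rintro ⟨i, rfl⟩
    cases hb : par i
    · exact Or.inl ⟨i, hb, rfl⟩
    · exact Or.inr ⟨i, hb, rfl⟩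
  · rintro (⟨i, -, rfl⟩ | ⟨i, -, rfl⟩) <;> exact ⟨i, rfl⟩

lemma hexM_inter_ne {f : Fin 6 → V} (hf : Function.Injective f) {b b' : Bool} (h : b ≠ b') :
    hexM f b ∩ hexM f b' = ∅ := by
  ext e
  simp only [Set.mem_inter_iff, Set.mem_empty_iff_false, iff_false, not_and]
  rintro ⟨i, hi, rfl⟩ ⟨j, hj, he⟩
  obtain rfl : i = j := (hexEdge_eq_iff hf).1 he
  exact h (hi.symm.trans hj)

lemma hexM_mem_or {f : Fin 6 → V} {b b' : Bool} (h : b ≠ b') {e : Sym2 V}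
    (he : e ∈ hexEdges f) : e ∈ hexM f b ∨ e ∈ hexM f b' := by
  obtain ⟨i, rfl⟩ := he
  by_cases hp : par i = b
  · exact Or.inl ⟨i, hp, rfl⟩
  · have hp' : par i = b' := by cases b <;> cases b' <;> simp_all
    exact Or.inr ⟨i, hp', rfl⟩

lemma localPM_eq_hexM {f : Fin 6 → V} (hf : Function.Injective f) {N : Set (Sym2 V)}
    (hsub : N ⊆ hexEdges f) (hcov : ∀ j : Fin 6, ∃! e, e ∈ N ∧ f j ∈ e) :
    ∃ b, N = hexM f b := by
  have ht_ex : ∃ t : Fin 6 → Bool, ∀ i, t i = true ↔ s(f i, f (i + 1)) ∈ N := by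
    classical
    exact ⟨fun i => decide (s(f i, f (i + 1)) ∈ N), fun i => by simp⟩
  obtain ⟨t, ht⟩ := ht_ex
  have hyp : ∀ j : Fin 6, ∃ i : Fin 6, (t i = true ∧ (j = i ∨ j = i + 1)) ∧
      ∀ i' : Fin 6, (t i' = true ∧ (j = i' ∨ j = i' + 1)) → i' = i := by
    intro j
    obtain ⟨e, ⟨heN, hje⟩, hu⟩ := hcov j
    obtain ⟨i, rfl⟩ := hsub heN
    refine ⟨i, ⟨(ht i).2 heN, (mem_hexEdge hf).1 hje⟩, ?_⟩
    rintro i' ⟨hti', hji'⟩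
    exact (hexEdge_eq_iff hf).1 (hu _ ⟨(ht i').1 hti', (mem_hexEdge hf).2 hji'⟩)
  rcases key2 t hyp with h | h
  · refine ⟨true, ?_⟩
    ext e
    constructor
    · intro he
      obtain ⟨i, rfl⟩ := hsub he
      exact ⟨i, by rw [← h i]; exact (ht i).2 he, rfl⟩
    · rintro ⟨i, hp, rfl⟩
      exact (ht i).1 (by rw [h i, hp])
  · refine ⟨false, ?_⟩
    ext e
    constructor
    · intro he
      obtain ⟨i, rfl⟩ := hsub he
      refine ⟨i, ?_, rfl⟩
      have := (ht i).2 he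
      rw [h i] at this
      exact (Bool.not_eq_true' (par i)).mp (by simpa using this)
    · rintro ⟨i, hp, rfl⟩
      refine (ht i).1 ?_
      rw [h i, hp]
      rfl



variable {G H : SimpleGraph V}

lemma mem_supp_of_mem_compEdges {c : H.ConnectedComponent} {e : Sym2 V} {v : V}
    (he : e ∈ compEdges H c) (hv : v ∈ e) : v ∈ c.supp := he.2 v hv

lemma eq_of_mem_compEdges {c c' : H.ConnectedComponent} {e : Sym2 V}
    (h1 : e ∈ compEdges H c) (h2 : e ∈ compEdges H c') : c = c' := by
  induction e with
  | _ x y =>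
    have hx1 : x ∈ c.supp := h1.2 x (Sym2.mem_mk_left x y)
    have hx2 : x ∈ c'.supp := h2.2 x (Sym2.mem_mk_left x y)
    rw [ConnectedComponent.mem_supp_iff] at hx1 hx2
    rw [← hx1, ← hx2]

/-- The data of a hexagon component: a 6-cycle map tracing it. -/
structure HexData (H : SimpleGraph V) (c : H.ConnectedComponent) where
  f : Fin 6 → V
  inj : Function.Injective f
  adjH : ∀ i : Fin 6, H.Adj (f i) (f (i + 1))
  mem : ∀ i : Fin 6, f i ∈ c.supp
  surj : ∀ v ∈ c.supp, ∃ i, f i = v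
  edges : compEdges H c = hexEdges f

noncomputable def hexData {c : H.ConnectedComponent} (h : IsHexComp H c) : HexData H c := by
  have φ : H.induce c.supp ≃g cycleGraph 6 := Classical.choice h
  refine ⟨fun i => (φ.symm i : V), ?_, ?_, fun i => (φ.symm i).2, ?_, ?_⟩
  · intro i j hij
    exact φ.symm.toEquiv.injective (Subtype.val_injective hij)
  · intro i
    have hadj : (cycleGraph 6).Adj i (i + 1) := by
      rw [cycleGraph_adj]
      right
      exact add_sub_cancel_left i 1
    exact φ.symm.map_rel_iff.2 hadj
  · intro v hv
    exact ⟨φ ⟨v, hv⟩, by simp⟩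
  · ext e
    constructor
    · rintro ⟨he, hsupp⟩
      induction e with
      | _ x y =>
        have hx : x ∈ c.supp := hsupp x (Sym2.mem_mk_left x y)
        have hy : y ∈ c.supp := hsupp y (Sym2.mem_mk_right x y)
        have hadj : H.Adj x y := (mem_edgeSet H).1 he
        have hadj' : (cycleGraph 6).Adj (φ ⟨x, hx⟩) (φ ⟨y, hy⟩) := by
          rw [φ.map_rel_iff]
          exact hadj
        set i := φ ⟨x, hx⟩
        set j := φ ⟨y, hy⟩
        have hxi : (φ.symm i : V) = x := by rw [RelIso.symm_apply_apply]
        have hyj : (φ.symm j : V) = y := by rw [RelIso.symm_apply_apply]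
        rw [cycleGraph_adj] at hadj'
        rcases hadj' with hij | hij
        · -- i - j = 1, so i = j + 1
          refine ⟨j, ?_⟩
          have : i = j + 1 := by exact sub_eq_iff_eq_add'.mp hij
          rw [← hxi, ← hyj, this, Sym2.eq_swap]
        · refine ⟨i, ?_⟩
          have : j = i + 1 := by exact sub_eq_iff_eq_add'.mp hij
          rw [← hxi, ← hyj, this]
    · rintro ⟨i, rfl⟩
      have hadj : (cycleGraph 6).Adj i (i + 1) := by
        rw [cycleGraph_adj]; right; exact add_sub_cancel_left i 1
      have hadj' : H.Adj (φ.symm i : V) (φ.symm (i + 1) : V) := φ.symm.map_rel_iff.2 hadj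
      refine ⟨(mem_edgeSet H).2 hadj', ?_⟩
      intro v hv
      rw [Sym2.mem_iff] at hv
      rcases hv with rfl | rfl
      · exact (φ.symm i).2
      · exact (φ.symm (i + 1)).2

lemma edgeComp_data {c : H.ConnectedComponent} (h : IsEdgeComp H c) :
    ∃ e₀ : Sym2 V, compEdges H c = {e₀} ∧ ∀ v ∈ c.supp, v ∈ e₀ := by
  have φ : H.induce c.supp ≃g (⊤ : SimpleGraph (Fin 2)) := Classical.choice h
  set a : V := (φ.symm 0 : V) with ha
  set b : V := (φ.symm 1 : V) with hb
  have hmem : ∀ v (hv : v ∈ c.supp), v = a ∨ v = b := by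
    intro v hv
    have : φ ⟨v, hv⟩ = 0 ∨ φ ⟨v, hv⟩ = 1 := by omega
    rcases this with h0 | h0
    · left; rw [ha, ← h0, RelIso.symm_apply_apply]
    · right; rw [hb, ← h0, RelIso.symm_apply_apply]
  have hadj : H.Adj a b := by
    have : (⊤ : SimpleGraph (Fin 2)).Adj 0 1 := by simp
    exact φ.symm.map_rel_iff.2 this
  refine ⟨s(a, b), ?_, ?_⟩
  · ext e
    constructor
    · rintro ⟨he, hsupp⟩
      induction e with
      | _ x y =>
        have hxy : H.Adj x y := (mem_edgeSet H).1 he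
        have hne : x ≠ y := hxy.ne
        have hx' := hsupp x (Sym2.mem_mk_left x y)
        have hy' := hsupp y (Sym2.mem_mk_right x y)
        rcases hmem x hx' with h1 | h1 <;> rcases hmem y hy' with h2 | h2
        · rw [h1, h2] at hne; exact absurd rfl hne
        · rw [h1, h2]; exact rfl
        · rw [h1, h2]; exact Sym2.eq_swap
        · rw [h1, h2] at hne; exact absurd rfl hne
    · rintro rfl
      refine ⟨(mem_edgeSet H).2 hadj, ?_⟩
      intro v hv
      rw [Sym2.mem_iff] at hv
      rcases hv with rfl | rfl
      · exact (φ.symm 0).2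
      · exact (φ.symm 1).2
  · intro v hv
    rw [Sym2.mem_iff]
    exact hmem v hv

lemma not_edge_of_hex {c : H.ConnectedComponent} (h1 : IsHexComp H c)
    (h2 : IsEdgeComp H c) : False := by
  have φ := Classical.choice h1
  have ψ := Classical.choice h2
  have e : Fin 6 ≃ Fin 2 := φ.toEquiv.symm.trans ψ.toEquiv
  simpa using Fintype.card_congr e

lemma compEdges_subset_edgeSet (c : H.ConnectedComponent) :
    compEdges H c ⊆ H.edgeSet := fun _ he => he.1

lemma hexEdges_ncard {f : Fin 6 → V} (hf : Function.Injective f) :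
    (hexEdges f).ncard = 6 := by
  have hrange : hexEdges f = Set.range (fun i : Fin 6 => s(f i, f (i + 1))) := by
    ext e
    simp [hexEdges, Set.mem_range, eq_comm]
  have hinj : Function.Injective (fun i : Fin 6 => s(f i, f (i + 1))) := by
    intro i j hij
    exact (hexEdge_eq_iff hf).1 hij
  rw [hrange, ← Nat.card_coe_set_eq]
  rw [Nat.card_congr (Equiv.ofInjective _ hinj).symm]
  simp

/-- Hexagon components of `H`. -/
abbrev Hx (H : SimpleGraph V) := {c : H.ConnectedComponent // IsHexComp H c}

variable (H) in
/-- The piece of the matching in component `c`, given a choice of parities `b`. -/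
noncomputable def pieces (hd : ∀ c : Hx H, HexData H c.1) (b : Hx H → Bool)
    (c : H.ConnectedComponent) : Set (Sym2 V) :=
  open scoped Classical in
  if h : IsHexComp H c then hexM (hd ⟨c, h⟩).f (b ⟨c, h⟩) else compEdges H c

variable (H) in
/-- The matching assembled from the pieces. -/
noncomputable def toM (hd : ∀ c : Hx H, HexData H c.1) (b : Hx H → Bool) : Set (Sym2 V) :=
  {e | ∃ c : H.ConnectedComponent, e ∈ pieces H hd b c}

variable {hd : ∀ c : Hx H, HexData H c.1} {b b' : Hx H → Bool}

lemma pieces_subset (c : H.ConnectedComponent) : pieces H hd b c ⊆ compEdges H c := by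
  unfold pieces
  split_ifs
  · rename_i h
    rw [(hd ⟨c, h⟩).edges]
    exact hexM_subset _ _
  · exact subset_rfl

lemma pieces_hex {c : H.ConnectedComponent} (h : IsHexComp H c) :
    pieces H hd b c = hexM (hd ⟨c, h⟩).f (b ⟨c, h⟩) := by
  unfold pieces; rw [dif_pos h]

lemma pieces_nonhex {c : H.ConnectedComponent} (h : ¬IsHexComp H c) :
    pieces H hd b c = compEdges H c := by
  unfold pieces; rw [dif_neg h]

lemma pieces_cover (hH : IsClarCover G H) (c : H.ConnectedComponent) {v : V}
    (hv : v ∈ c.supp) : ∃! e, e ∈ pieces H hd b c ∧ v ∈ e := by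
  by_cases h : IsHexComp H c
  · rw [pieces_hex h]
    obtain ⟨j, rfl⟩ := (hd ⟨c, h⟩).surj v hv
    exact hexM_cover (hd ⟨c, h⟩).inj _ j
  · rw [pieces_nonhex h]
    have hedge : IsEdgeComp H c := (hH.2 c).resolve_left h
    obtain ⟨e₀, hce, hcov⟩ := edgeComp_data hedge
    rw [hce]
    exact ⟨e₀, ⟨rfl, hcov v hv⟩, fun e he => he.1⟩

lemma toM_pm (hH : IsClarCover G H) : IsPMSet G (toM H hd b) := by
  constructor
  · rintro e ⟨c, hc⟩
    exact edgeSet_mono hH.1 (compEdges_subset_edgeSet c (pieces_subset c hc))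
  · intro v
    set c := H.connectedComponentMk v with hc
    have hv : v ∈ c.supp := rfl
    obtain ⟨e, ⟨hep, hev⟩, hu⟩ := pieces_cover (b := b) hH c hv
    refine ⟨e, ⟨⟨c, hep⟩, hev⟩, ?_⟩
    rintro e' ⟨⟨c', hep'⟩, hev'⟩
    have hvc' : v ∈ c'.supp :=
      mem_supp_of_mem_compEdges (pieces_subset c' hep') hev'
    have : c' = c := by
      rw [ConnectedComponent.mem_supp_iff] at hvc'
      rw [hc, ← hvc']
    rw [this] at hep'
    exact hu e' ⟨hep', hev'⟩

lemma toM_inter (c : H.ConnectedComponent) :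
    toM H hd b ∩ compEdges H c = pieces H hd b c := by
  ext e
  constructor
  · rintro ⟨⟨c', hep'⟩, hec⟩
    have : c' = c := eq_of_mem_compEdges (pieces_subset c' hep') hec
    rwa [this] at hep'
  · intro he
    exact ⟨⟨c, he⟩, pieces_subset c he⟩

lemma toM_mem_clarVC (hH : IsClarCover G H) (hpm : IsPMSet G (toM H hd b)) :
    (⟨toM H hd b, hpm⟩ : {M : Set (Sym2 V) // IsPMSet G M}) ∈ clarVC G H := by
  constructor
  · intro c hhex v hv
    have : (toM H hd b) ∩ compEdges H c = pieces H hd b c := toM_inter c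
    simp only [this]
    exact pieces_cover hH c hv
  · intro c hedge e he
    have hnothex : ¬IsHexComp H c := fun h => not_edge_of_hex h hedge
    exact ⟨c, (pieces_nonhex hnothex).symm ▸ he⟩

lemma symmDiff_toM :
    symmDiff (toM H hd b) (toM H hd b') =
      {e | ∃ c : Hx H, b c ≠ b' c ∧ e ∈ compEdges H c.1} := by
  have onesided : ∀ (b b' : Hx H → Bool) (e : Sym2 V), e ∈ toM H hd b → e ∉ toM H hd b' →
      ∃ c : Hx H, b c ≠ b' c ∧ e ∈ compEdges H c.1 := by
    rintro b b' e ⟨c, hc⟩ hne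
    by_cases h : IsHexComp H c
    · rw [pieces_hex h] at hc
      refine ⟨⟨c, h⟩, ?_, pieces_subset c ((pieces_hex (b := b) h).symm ▸ hc)⟩
      intro heq
      exact hne ⟨c, (pieces_hex (b := b') h).symm ▸ (heq ▸ hc)⟩
    · rw [pieces_nonhex h] at hc
      exact absurd ⟨c, (pieces_nonhex (b := b') h).symm ▸ hc⟩ hne
  ext e
  constructor
  · intro he
    rw [Set.mem_symmDiff] at he
    rcases he with ⟨h1, h2⟩ | ⟨h1, h2⟩
    · exact onesided b b' e h1 h2
    · obtain ⟨c, hc, hce⟩ := onesided b' b e h1 h2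
      exact ⟨c, hc.symm, hce⟩
  · rintro ⟨⟨c, h⟩, hbc, hce⟩
    have hce' : e ∈ hexEdges (hd ⟨c, h⟩).f := (hd ⟨c, h⟩).edges ▸ hce
    rw [Set.mem_symmDiff]
    have hdisj : ∀ (b b' : Hx H → Bool), b ⟨c, h⟩ ≠ b' ⟨c, h⟩ →
        e ∈ hexM (hd ⟨c, h⟩).f (b ⟨c, h⟩) → e ∈ toM H hd b ∧ e ∉ toM H hd b' := by
      intro b b' hbb hmem
      refine ⟨⟨c, (pieces_hex (b := b) h).symm ▸ hmem⟩, ?_⟩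
      intro hmem'
      have : e ∈ hexM (hd ⟨c, h⟩).f (b' ⟨c, h⟩) := by
        rw [← pieces_hex (b := b') h, ← toM_inter c]
        exact ⟨hmem', hce⟩
      have hempty := hexM_inter_ne (hd ⟨c, h⟩).inj hbb
      exact absurd (Set.mem_inter hmem this) (hempty ▸ id)
    rcases hexM_mem_or (f := (hd ⟨c, h⟩).f) hbc hce' with hm | hm
    · exact Or.inl (hdisj b b' hbc hm)
    · exact Or.inr (hdisj b' b (Ne.symm hbc) hm)

lemma isHexagon_compEdges (hH : IsClarCover G H) (c : Hx H) :
    IsHexagon G (compEdges H c.1) :=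
  let d := hexData c.2
  ⟨d.f, ⟨d.inj, fun i => hH.1 (d.adjH i)⟩, d.edges⟩

lemma compEdges_ncard_hex (c : Hx H) : (compEdges H c.1).ncard = 6 := by
  have d := hexData c.2
  rw [d.edges, hexEdges_ncard d.inj]

lemma adj_iff [Fintype V] (hH : IsClarCover G H) :
    IsHexagon G (symmDiff (toM H hd b) (toM H hd b')) ↔ ∃! c : Hx H, b c ≠ b' c := by
  constructor
  · intro hhex
    obtain ⟨e, he⟩ := hhex.nonempty
    rw [symmDiff_toM] at hhex he
    obtain ⟨c, hc, hce⟩ := he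
    refine ⟨c, hc, ?_⟩
    intro c' hc'
    by_contra hne
    -- two distinct components inside a 6-edge hexagon: contradiction by cardinality
    obtain ⟨g, ⟨hginj, -⟩, hgE⟩ := hhex
    have hsub : compEdges H c.1 ∪ compEdges H c'.1 ⊆ hexEdges g := by
      rw [← hgE]
      rintro e' (h' | h')
      · exact ⟨c, hc, h'⟩
      · exact ⟨c', hc', h'⟩
    have hdisj : Disjoint (compEdges H c.1) (compEdges H c'.1) := by
      rw [Set.disjoint_left]
      intro e' h1 h2
      exact hne (Subtype.ext (eq_of_mem_compEdges h2 h1))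
    have hcard : (compEdges H c.1 ∪ compEdges H c'.1).ncard = 12 := by
      rw [Set.ncard_union_eq hdisj (Set.toFinite _) (Set.toFinite _),
        compEdges_ncard_hex, compEdges_ncard_hex]
    have hle : (compEdges H c.1 ∪ compEdges H c'.1).ncard ≤ (hexEdges g).ncard :=
      Set.ncard_le_ncard hsub (Set.toFinite _)
    rw [hcard, hexEdges_ncard hginj] at hle
    omega
  · rintro ⟨c, hc, hu⟩
    have : symmDiff (toM H hd b) (toM H hd b') = compEdges H c.1 := by
      rw [symmDiff_toM]
      ext e
      constructor
      · rintro ⟨c', hc', hce⟩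
        rwa [hu c' hc'] at hce
      · intro he
        exact ⟨c, hc, he⟩
    rw [this]
    exact isHexagon_compEdges hH c

lemma toM_injective (hne : b ≠ b') : toM H hd b ≠ toM H hd b' := by
  intro heq
  have h1 : ∃ c : Hx H, b c ≠ b' c := by
    by_contra h
    push_neg at h
    exact hne (funext fun c => h c)
  obtain ⟨c, hc⟩ := h1
  have hnonempty : (compEdges H c.1).Nonempty := by
    have d := hexData c.2
    rw [d.edges]
    exact ⟨s(d.f 0, d.f 1), 0, rfl⟩
  obtain ⟨e, he⟩ := hnonempty
  have : e ∈ symmDiff (toM H hd b) (toM H hd b') := by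
    rw [symmDiff_toM]
    exact ⟨c, hc, he⟩
  rw [heq, symmDiff_self] at this
  exact this

lemma toM_surjective (hH : IsClarCover G H)
    (M : {M : Set (Sym2 V) // IsPMSet G M}) (hM : M ∈ clarVC G H) :
    ∃ b : Hx H → Bool, toM H hd b = M.1 := by
  classical
  -- every edge of M lies in the compEdges of the component of its endpoints
  have step1 : ∀ (c : H.ConnectedComponent) (v : V), v ∈ c.supp →
      ∃ e, (e ∈ M.1 ∩ compEdges H c) ∧ v ∈ e := by
    intro c v hv
    rcases hH.2 c with hhex | hedge
    · obtain ⟨e, he, -⟩ := hM.1 c hhex v hv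
      exact ⟨e, he.1, he.2⟩
    · obtain ⟨e₀, hce, hcov⟩ := edgeComp_data hedge
      refine ⟨e₀, ⟨hM.2 c hedge ?_, ?_⟩, hcov v hv⟩
      · rw [hce]; exact rfl
      · rw [hce]; exact rfl
  have step2 : ∀ e ∈ M.1, ∃ c : H.ConnectedComponent, e ∈ compEdges H c := by
    intro e he
    induction e with
    | _ x y =>
      set c := H.connectedComponentMk x with hcdef
      have hx : x ∈ c.supp := rfl
      obtain ⟨e', ⟨he'M, he'c⟩, hxe'⟩ := step1 c x hx
      obtain ⟨e₁, -, hu⟩ := M.2.2 x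
      have h1 : e' = e₁ := hu e' ⟨he'M, hxe'⟩
      have h2 : s(x, y) = e₁ := hu s(x, y) ⟨he, Sym2.mem_mk_left x y⟩
      exact ⟨c, (h2.trans h1.symm) ▸ he'c⟩
  have step3 : ∀ c : Hx H, ∃ bc : Bool,
      M.1 ∩ compEdges H c.1 = hexM (hd c).f bc := by
    intro c
    refine localPM_eq_hexM (hd c).inj ?_ ?_
    · rw [← (hd c).edges]
      exact Set.inter_subset_right
    · intro j
      exact hM.1 c.1 c.2 ((hd c).f j) ((hd c).mem j)
  refine ⟨fun c => Classical.choose (step3 c), ?_⟩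
  have hspec : ∀ c : Hx H,
      M.1 ∩ compEdges H c.1 = hexM (hd c).f (Classical.choose (step3 c)) :=
    fun c => Classical.choose_spec (step3 c)
  ext e
  constructor
  · rintro ⟨c, hc⟩
    by_cases hhex : IsHexComp H c
    · rw [pieces_hex hhex] at hc
      have := (hspec ⟨c, hhex⟩).symm ▸ hc
      exact this.1
    · rw [pieces_nonhex hhex] at hc
      exact hM.2 c ((hH.2 c).resolve_left hhex) hc
  · intro he
    obtain ⟨c, hce⟩ := step2 e he
    by_cases hhex : IsHexComp H c
    · refine ⟨c, ?_⟩
      rw [pieces_hex hhex]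
      rw [← hspec ⟨c, hhex⟩]
      exact ⟨he, hce⟩
    · exact ⟨c, (pieces_nonhex hhex).symm ▸ hce⟩

end ClarAux

/-- If `C` is a Clar cover of a finite simple graph `G` with
exactly `n` hexagon components, then the subgraph of the resonance graph
`R(G)` induced by `V(C)` is isomorphic to the `n`-cube `Q_n`; in particular
`V(C)` has exactly `2ⁿ` elements. -/
theorem clarVC_induces_cube {V : Type*} [Fintype V] (G H : SimpleGraph V)
    (hH : IsClarCover G H) (n : ℕ) (hn : hexCount H = n) :
    Nonempty ((resonanceGraph G).induce (clarVC G H) ≃g cubeGraph n) ∧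
      (clarVC G H).ncard = 2 ^ n := by
  classical
  set hd : ∀ c : ClarAux.Hx H, ClarAux.HexData H c.1 := fun c => ClarAux.hexData c.2 with hd_def
  set Φ : (ClarAux.Hx H → Bool) → ↥(clarVC G H) :=
    fun b => ⟨⟨ClarAux.toM H hd b, ClarAux.toM_pm hH⟩, ClarAux.toM_mem_clarVC hH _⟩ with hΦ
  have hinj : Function.Injective Φ := by
    intro b b' h
    by_contra hne
    exact ClarAux.toM_injective hne (congrArg (fun x => x.1.1) h)
  have hsurj : Function.Surjective Φ := by
    rintro ⟨M, hM⟩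
    obtain ⟨b, hb⟩ := ClarAux.toM_surjective (hd := hd) hH M hM
    exact ⟨b, Subtype.ext (Subtype.ext hb)⟩
  let eqv : (ClarAux.Hx H → Bool) ≃ ↥(clarVC G H) := Equiv.ofBijective Φ ⟨hinj, hsurj⟩
  have hfin : Finite H.ConnectedComponent := Quot.finite _
  have : Fintype (ClarAux.Hx H) := Fintype.ofFinite _
  let κ : ClarAux.Hx H ≃ Fin n :=
    Fintype.equivFinOfCardEq (by rw [← Nat.card_eq_fintype_card]; exact hn)
  let E : (Fin n → Bool) ≃ ↥(clarVC G H) :=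
    (Equiv.arrowCongr κ.symm (Equiv.refl Bool)).trans eqv
  have hvE : ∀ a, (E a).1.1 = ClarAux.toM H hd (a ∘ κ) := fun a => rfl
  constructor
  · refine ⟨RelIso.symm ⟨E, ?_⟩⟩
    intro a b
    show (resonanceGraph G).Adj (E a).1 (E b).1 ↔ ∃! i, a i ≠ b i
    show IsHexagon G (symmDiff (E a).1.1 (E b).1.1) ↔ _
    rw [hvE, hvE, ClarAux.adj_iff hH]
    exact Equiv.existsUnique_congr_right (q := fun i => a i ≠ b i) (e := κ)
  · rw [← Nat.card_coe_set_eq, Nat.card_congr E.symm, Nat.card_eq_fintype_card]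
    simp
end

section
/- Let G be a finite simple graph in which any two distinct 6-cycles are either vertex-disjoint or share exactly one edge. Suppose M_1, M_2, M_3, M_4 are four pairwise distinct perfect matchings of G forming a 4-cycle M_1M_2M_3M_4M_1 in the resonance graph R(G) (i.e. each of M_1⊕M_2, M_2⊕M_3, M_3⊕M_4, M_4⊕M_1 is the edge set of a 6-cycle of G). Then M_1 ⊕ M_2 = M_3 ⊕ M_4, M_1 ⊕ M_4 = M_2 ⊕ M_3, and the two 6-cycles with edge sets M_1 ⊕ M_2 and M_1 ⊕ M_4 are vertex-disjoint. -/
open SimpleGraph Polynomial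

/-! ### Auxiliary material -/

/-- The vertex set of a set of edges. -/
def VS {V : Type*} (S : Set (Sym2 V)) : Set V := {v | ∃ e ∈ S, v ∈ e}

lemma VS_hexEdges {V : Type*} (f : Fin 6 → V) : VS (hexEdges f) = Set.range f := by
  ext v
  constructor
  · rintro ⟨e, ⟨i, rfl⟩, hv⟩
    rcases Sym2.mem_iff.mp hv with h | h
    · exact ⟨i, h.symm⟩
    · exact ⟨i + 1, h.symm⟩
  · rintro ⟨i, rfl⟩
    exact ⟨s(f i, f (i + 1)), ⟨i, rfl⟩, Sym2.mem_mk_left _ _⟩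

lemma mem_hexEdges {V : Type*} (f : Fin 6 → V) (i : Fin 6) :
    s(f i, f (i + 1)) ∈ hexEdges f := ⟨i, rfl⟩

lemma ncard_hexEdges {V : Type*} {f : Fin 6 → V} (hf : Function.Injective f) :
    (hexEdges f).ncard = 6 := by
  have : hexEdges f = Set.range (fun i : Fin 6 => s(f i, f (i + 1))) := by
    ext e; simp [hexEdges, eq_comm]
  rw [this, ← Nat.card_coe_set_eq, Nat.card_range_of_injective]
  · simp
  · intro i j h
    simp only [Sym2.eq, Sym2.rel_iff', Prod.mk.injEq, Prod.swap_prod_mk] at h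
    rcases h with ⟨h1, h2⟩ | ⟨h1, h2⟩
    · exact hf h1
    · have hi := hf h1; have hj := hf h2; omega

/-- If `v` lies on an edge of `M ∆ N`, then the `M`-matching edge at `v`
belongs to `M \ N`. -/
lemma matching_edge_mem {V : Type*} {G : SimpleGraph V} {M N : Set (Sym2 V)}
    (hM : IsPMSet G M) (hN : IsPMSet G N) {v : V} (hv : v ∈ VS (symmDiff M N)) :
    ∃ em, (em ∈ M ∧ v ∈ em) ∧ em ∉ N := by
  obtain ⟨d, hd, hvd⟩ := hv
  obtain ⟨em, ⟨hemM, hvem⟩, huniq⟩ := hM.2 v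
  refine ⟨em, ⟨hemM, hvem⟩, ?_⟩
  intro hemN
  rw [Set.mem_symmDiff] at hd
  rcases hd with ⟨hdM, hdN⟩ | ⟨hdN, hdM⟩
  · have : d = em := huniq d ⟨hdM, hvd⟩
    exact hdN (this ▸ hemN)
  · obtain ⟨en, -, hun⟩ := hN.2 v
    have h1 : d = en := hun d ⟨hdN, hvd⟩
    have h2 : em = en := hun em ⟨hemN, hvem⟩
    exact hdM (h1 ▸ h2 ▸ hemM)

/-- If the vertex sets of `A` and `B` are disjoint, so are `A` and `B`. -/
lemma edge_disjoint_of_VS_disjoint {V : Type*} {A B : Set (Sym2 V)}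
    (h : VS A ∩ VS B = ∅) : A ∩ B = ∅ := by
  ext d
  simp only [Set.mem_inter_iff, Set.mem_empty_iff_false, iff_false, not_and]
  intro hA hB
  induction d using Sym2.ind with
  | _ x y =>
    have : x ∈ VS A ∩ VS B :=
      ⟨⟨_, hA, Sym2.mem_mk_left _ _⟩, ⟨_, hB, Sym2.mem_mk_left _ _⟩⟩
    simp [h] at this

/-- A hexagon contained in a union of two vertex-disjoint edge sets lies in one
of them: the one-sided version. -/
lemma hex_subset_left {V : Type*} {A B : Set (Sym2 V)}
    (hdisj : VS A ∩ VS B = ∅) (h : Fin 6 → V) (hsub : hexEdges h ⊆ A ∪ B)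
    (h0 : h 0 ∈ VS A) : hexEdges h ⊆ A := by
  have hVdisj : ∀ v, v ∈ VS A → v ∈ VS B → False := by
    intro v ha hb
    have := Set.eq_empty_iff_forall_notMem.mp hdisj v
    exact this ⟨ha, hb⟩
  have step : ∀ i : Fin 6, h i ∈ VS A → s(h i, h (i + 1)) ∈ A ∧ h (i + 1) ∈ VS A := by
    intro i hi
    rcases hsub (mem_hexEdges h i) with hA | hB
    · exact ⟨hA, ⟨_, hA, Sym2.mem_mk_right _ _⟩⟩
    · exact absurd hi fun hi => hVdisj _ hi ⟨_, hB, Sym2.mem_mk_left _ _⟩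
  have a0 := step 0 h0
  have a1 := step 1 a0.2
  have a2 := step 2 a1.2
  have a3 := step 3 a2.2
  have a4 := step 4 a3.2
  have a5 := step 5 a4.2
  rintro d ⟨i, rfl⟩
  fin_cases i
  · exact a0.1
  · exact a1.1
  · exact a2.1
  · exact a3.1
  · exact a4.1
  · exact a5.1

lemma hex_subset {V : Type*} {A B : Set (Sym2 V)}
    (hdisj : VS A ∩ VS B = ∅) (h : Fin 6 → V) (hsub : hexEdges h ⊆ A ∪ B) :
    hexEdges h ⊆ A ∨ hexEdges h ⊆ B := by
  rcases hsub (mem_hexEdges h 0) with hA | hB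
  · exact Or.inl (hex_subset_left hdisj h hsub ⟨_, hA, Sym2.mem_mk_left _ _⟩)
  · refine Or.inr (hex_subset_left (A := B) (B := A) ?_ h ?_ ⟨_, hB, Sym2.mem_mk_left _ _⟩)
    · rw [Set.inter_comm]; exact hdisj
    · rw [Set.union_comm]; exact hsub

/-- If two distinct hexagons share a vertex, they share exactly one edge. -/
lemma hex_inter_card {V : Type*} [Fintype V] {G : SimpleGraph V}
    (hhex : ∀ f g : Fin 6 → V, IsHexCycle G f → IsHexCycle G g →
      hexEdges f ≠ hexEdges g →
      Set.range f ∩ Set.range g = ∅ ∨ (hexEdges f ∩ hexEdges g).ncard = 1)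
    {f g : Fin 6 → V} (hf : IsHexCycle G f) (hg : IsHexCycle G g)
    (hne : hexEdges f ≠ hexEdges g) {v : V}
    (hvf : v ∈ VS (hexEdges f)) (hvg : v ∈ VS (hexEdges g)) :
    (hexEdges f ∩ hexEdges g).ncard = 1 := by
  rcases hhex f g hf hg hne with h | h
  · rw [VS_hexEdges] at hvf hvg
    exact absurd (Set.mem_inter hvf hvg) (by simp [h])
  · exact h

/-- Symmetric-difference cancellation: middle term. -/
lemma sd_cancel_mid {α : Type*} {A B C : Set α} (h : symmDiff A B = symmDiff B C) :
    A = C := by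
  ext x; have := Set.ext_iff.mp h x
  simp only [Set.mem_symmDiff] at this; tauto

/-- Symmetric-difference cancellation: outer term. -/
lemma sd_cancel_out {α : Type*} {A B C : Set α} (h : symmDiff A B = symmDiff C A) :
    B = C := by
  ext x; have := Set.ext_iff.mp h x
  simp only [Set.mem_symmDiff] at this; tauto

lemma sd_four {α : Type*} (A B C D : Set α) :
    symmDiff (symmDiff A B) (symmDiff B C) = symmDiff (symmDiff C D) (symmDiff D A) := by
  ext x; simp only [Set.mem_symmDiff]; tauto

lemma sd_swap {α : Type*} {A B C D : Set α} (h : symmDiff C D = symmDiff A B) :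
    symmDiff A D = symmDiff B C := by
  ext x; have := Set.ext_iff.mp h x
  simp only [Set.mem_symmDiff] at this ⊢; tauto

lemma sd_swap' {α : Type*} {A B C D : Set α} (h : symmDiff C D = symmDiff A B) :
    symmDiff D A = symmDiff B C := by
  ext x; have := Set.ext_iff.mp h x
  simp only [Set.mem_symmDiff] at this ⊢; tauto

lemma sd_disj_union {α : Type*} {A B : Set α} (h : A ∩ B = ∅) :
    symmDiff A B = A ∪ B := by
  ext x
  have hx : ¬(x ∈ A ∧ x ∈ B) := fun hx =>
    Set.eq_empty_iff_forall_notMem.mp h x hx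
  simp only [Set.mem_symmDiff, Set.mem_union]
  tauto

lemma sd_subset_union {α : Type*} (A B : Set α) : symmDiff A B ⊆ A ∪ B := by
  intro x hx
  rw [Set.mem_symmDiff] at hx
  rcases hx with h | h
  · exact Or.inl h.1
  · exact Or.inr h.1

lemma ncard_union_twelve {V : Type*} [Fintype V] {A B : Set (Sym2 V)}
    (h : A ∩ B = ∅) (hA : A.ncard = 6) (hB : B.ncard = 6) :
    (A ∪ B).ncard = 12 := by
  rw [Set.ncard_union_eq (Set.disjoint_iff_inter_eq_empty.mpr h)
    (Set.toFinite _) (Set.toFinite _), hA, hB]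

lemma sd_ncard_le_eleven {V : Type*} [Fintype V] {A B : Set (Sym2 V)} {d : Sym2 V}
    (hdA : d ∈ A) (hdB : d ∈ B) (hA : A.ncard = 6) (hB : B.ncard = 6) :
    (symmDiff A B).ncard ≤ 11 := by
  have hsub : symmDiff A B ⊆ (A ∪ B) \ {d} := by
    intro x hx
    refine ⟨sd_subset_union A B hx, ?_⟩
    intro hxd
    simp only [Set.mem_singleton_iff] at hxd
    subst hxd
    rw [Set.mem_symmDiff] at hx
    tauto
  have h1 : ((A ∪ B) \ {d}).ncard = (A ∪ B).ncard - 1 :=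
    Set.ncard_diff_singleton_of_mem (Or.inl hdA)
  have h2 : (A ∪ B).ncard ≤ 12 := by
    have := Set.ncard_union_le A B
    omega
  have h3 := Set.ncard_le_ncard hsub (Set.toFinite _)
  omega

lemma eq_singleton_of_mem_of_ncard_eq_one {α : Type*} {s : Set α} {e : α}
    (h1 : s.ncard = 1) (he : e ∈ s) : s = {e} := by
  obtain ⟨a, rfl⟩ := Set.ncard_eq_one.mp h1
  simp only [Set.mem_singleton_iff] at he
  rw [he]

set_option maxHeartbeats 1000000 in
/-- Let `G` be a finite simple graph in which any two distinct
6-cycles are either vertex-disjoint or share exactly one edge. If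
`M₁ M₂ M₃ M₄` are pairwise distinct perfect matchings of `G` forming a 4-cycle
`M₁M₂M₃M₄M₁` in the resonance graph, then `M₁ ⊕ M₂ = M₃ ⊕ M₄`,
`M₁ ⊕ M₄ = M₂ ⊕ M₃`, and the two 6-cycles with edge sets `M₁ ⊕ M₂` and
`M₁ ⊕ M₄` are vertex-disjoint. -/
theorem resonance_four_cycle {V : Type*} [Fintype V] (G : SimpleGraph V)
    (hhex : ∀ f g : Fin 6 → V, IsHexCycle G f → IsHexCycle G g →
      hexEdges f ≠ hexEdges g →
      Set.range f ∩ Set.range g = ∅ ∨ (hexEdges f ∩ hexEdges g).ncard = 1)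
    (M₁ M₂ M₃ M₄ : Set (Sym2 V))
    (hM₁ : IsPMSet G M₁) (hM₂ : IsPMSet G M₂) (hM₃ : IsPMSet G M₃) (hM₄ : IsPMSet G M₄)
    (h12 : M₁ ≠ M₂) (h13 : M₁ ≠ M₃) (h14 : M₁ ≠ M₄)
    (h23 : M₂ ≠ M₃) (h24 : M₂ ≠ M₄) (h34 : M₃ ≠ M₄)
    (e12 : IsHexagon G (symmDiff M₁ M₂)) (e23 : IsHexagon G (symmDiff M₂ M₃))
    (e34 : IsHexagon G (symmDiff M₃ M₄)) (e41 : IsHexagon G (symmDiff M₄ M₁)) :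
    symmDiff M₁ M₂ = symmDiff M₃ M₄ ∧ symmDiff M₁ M₄ = symmDiff M₂ M₃ ∧
      ∀ f g : Fin 6 → V, IsHexCycle G f → hexEdges f = symmDiff M₁ M₂ →
        IsHexCycle G g → hexEdges g = symmDiff M₁ M₄ →
        Set.range f ∩ Set.range g = ∅ := by
  classical
  obtain ⟨f₁, hf₁, hS₁⟩ := e12
  obtain ⟨f₂, hf₂, hS₂⟩ := e23
  obtain ⟨f₃, hf₃, hS₃⟩ := e34
  obtain ⟨f₄, hf₄, hS₄⟩ := e41
  have n1 : (symmDiff M₁ M₂).ncard = 6 := by rw [hS₁]; exact ncard_hexEdges hf₁.1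
  have n2 : (symmDiff M₂ M₃).ncard = 6 := by rw [hS₂]; exact ncard_hexEdges hf₂.1
  have n3 : (symmDiff M₃ M₄).ncard = 6 := by rw [hS₃]; exact ncard_hexEdges hf₃.1
  have n4 : (symmDiff M₄ M₁).ncard = 6 := by rw [hS₄]; exact ncard_hexEdges hf₄.1
  have neq12 : symmDiff M₁ M₂ ≠ symmDiff M₂ M₃ := fun h => h13 (sd_cancel_mid h)
  have neq34 : symmDiff M₃ M₄ ≠ symmDiff M₄ M₁ := fun h => h13 (sd_cancel_mid h).symm
  have hC : symmDiff (symmDiff M₁ M₂) (symmDiff M₂ M₃)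
      = symmDiff (symmDiff M₃ M₄) (symmDiff M₄ M₁) := sd_four M₁ M₂ M₃ M₄
  by_cases hdisj : VS (symmDiff M₁ M₂) ∩ VS (symmDiff M₂ M₃) = ∅
  · -- Case 1: the two hexagons are vertex-disjoint
    have hE12 : symmDiff M₁ M₂ ∩ symmDiff M₂ M₃ = ∅ := edge_disjoint_of_VS_disjoint hdisj
    have hU12 : (symmDiff M₁ M₂ ∪ symmDiff M₂ M₃).ncard = 12 := ncard_union_twelve hE12 n1 n2
    have hE34 : symmDiff M₃ M₄ ∩ symmDiff M₄ M₁ = ∅ := by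
      by_contra hne
      obtain ⟨d, hd3, hd4⟩ := Set.nonempty_iff_ne_empty.mpr hne
      have hle : (symmDiff (symmDiff M₃ M₄) (symmDiff M₄ M₁)).ncard ≤ 11 :=
        sd_ncard_le_eleven hd3 hd4 n3 n4
      rw [← hC, sd_disj_union hE12, hU12] at hle
      omega
    have hsub3 : symmDiff M₃ M₄ ⊆ symmDiff M₁ M₂ ∪ symmDiff M₂ M₃ := by
      intro d hd
      have hd4 : d ∉ symmDiff M₄ M₁ := fun h =>
        Set.eq_empty_iff_forall_notMem.mp hE34 d ⟨hd, h⟩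
      have : d ∈ symmDiff (symmDiff M₃ M₄) (symmDiff M₄ M₁) :=
        Set.mem_symmDiff.mpr (Or.inl ⟨hd, hd4⟩)
      rw [← hC, sd_disj_union hE12] at this
      exact this
    have hsub3' : hexEdges f₃ ⊆ symmDiff M₁ M₂ ∪ symmDiff M₂ M₃ := by
      rw [← hS₃]; exact hsub3
    rcases hex_subset hdisj f₃ hsub3' with hsl | hsr
    · -- S₃ ⊆ S₁, hence S₃ = S₁
      have hEq : symmDiff M₃ M₄ = symmDiff M₁ M₂ := by
        have hss : symmDiff M₃ M₄ ⊆ symmDiff M₁ M₂ := by rw [hS₃]; exact hsl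
        exact Set.eq_of_subset_of_ncard_le hss (by omega) (Set.toFinite _)
      have hc2 : symmDiff M₁ M₄ = symmDiff M₂ M₃ := sd_swap hEq
      refine ⟨hEq.symm, hc2, ?_⟩
      intro f g hf hfe hg hge
      have hrf : Set.range f = VS (symmDiff M₁ M₂) := by rw [← VS_hexEdges f, hfe]
      have hrg : Set.range g = VS (symmDiff M₂ M₃) := by rw [← VS_hexEdges g, hge, hc2]
      rw [hrf, hrg]
      exact hdisj
    · -- S₃ ⊆ S₂ is impossible
      exfalso
      have hEq : symmDiff M₃ M₄ = symmDiff M₂ M₃ := by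
        have hss : symmDiff M₃ M₄ ⊆ symmDiff M₂ M₃ := by rw [hS₃]; exact hsr
        exact Set.eq_of_subset_of_ncard_le hss (by omega) (Set.toFinite _)
      exact h24 (sd_cancel_out hEq).symm
  · -- Case 2: S₁ and S₂ share a vertex; derive a contradiction
    exfalso
    obtain ⟨v, hv1, hv2⟩ := Set.nonempty_iff_ne_empty.mpr hdisj
    have hv1' : v ∈ VS (symmDiff M₂ M₁) := by rwa [symmDiff_comm]
    obtain ⟨e, ⟨heM2, hve⟩, heM1⟩ := matching_edge_mem hM₂ hM₁ hv1'
    obtain ⟨e', ⟨he'M2, hve'⟩, he'M3⟩ := matching_edge_mem hM₂ hM₃ hv2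
    have hee' : e = e' := by
      obtain ⟨w, -, hu⟩ := hM₂.2 v
      rw [hu e ⟨heM2, hve⟩, hu e' ⟨he'M2, hve'⟩]
    subst hee'
    have heS1 : e ∈ symmDiff M₁ M₂ := Set.mem_symmDiff.mpr (Or.inr ⟨heM2, heM1⟩)
    have heS2 : e ∈ symmDiff M₂ M₃ := Set.mem_symmDiff.mpr (Or.inl ⟨he'M2, he'M3⟩)
    have hcard12 : (symmDiff M₁ M₂ ∩ symmDiff M₂ M₃).ncard = 1 := by
      have h := hex_inter_card hhex hf₁ hf₂ (by rw [← hS₁, ← hS₂]; exact neq12)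
        (v := v) (by rw [← hS₁]; exact hv1) (by rw [← hS₂]; exact hv2)
      rw [hS₁, hS₂]; exact h
    have hI12 : symmDiff M₁ M₂ ∩ symmDiff M₂ M₃ = {e} :=
      eq_singleton_of_mem_of_ncard_eq_one hcard12 ⟨heS1, heS2⟩
    have heC : e ∉ symmDiff (symmDiff M₁ M₂) (symmDiff M₂ M₃) := by
      rw [Set.mem_symmDiff]; tauto
    have hCcard : (symmDiff (symmDiff M₁ M₂) (symmDiff M₂ M₃)).ncard ≤ 11 :=
      sd_ncard_le_eleven heS1 heS2 n1 n2
    -- S₃ and S₄ also share a vertex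
    have h34v : (VS (symmDiff M₃ M₄) ∩ VS (symmDiff M₄ M₁)).Nonempty := by
      rw [Set.nonempty_iff_ne_empty]
      intro h
      have hE34 : symmDiff M₃ M₄ ∩ symmDiff M₄ M₁ = ∅ := edge_disjoint_of_VS_disjoint h
      have hU34 : (symmDiff M₃ M₄ ∪ symmDiff M₄ M₁).ncard = 12 := ncard_union_twelve hE34 n3 n4
      rw [hC, sd_disj_union hE34, hU34] at hCcard
      omega
    obtain ⟨v', hv3, hv4⟩ := h34v
    have hv3' : v' ∈ VS (symmDiff M₄ M₃) := by rwa [symmDiff_comm]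
    obtain ⟨e4, ⟨he4M4, hv'e4⟩, he4M3⟩ := matching_edge_mem hM₄ hM₃ hv3'
    obtain ⟨e4', ⟨he4'M4, hv'e4'⟩, he4'M1⟩ := matching_edge_mem hM₄ hM₁ hv4
    have he44 : e4 = e4' := by
      obtain ⟨w, -, hu⟩ := hM₄.2 v'
      rw [hu e4 ⟨he4M4, hv'e4⟩, hu e4' ⟨he4'M4, hv'e4'⟩]
    subst he44
    have he4S3 : e4 ∈ symmDiff M₃ M₄ := Set.mem_symmDiff.mpr (Or.inr ⟨he4M4, he4M3⟩)
    have he4S4 : e4 ∈ symmDiff M₄ M₁ := Set.mem_symmDiff.mpr (Or.inl ⟨he4'M4, he4'M1⟩)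
    have hcard34 : (symmDiff M₃ M₄ ∩ symmDiff M₄ M₁).ncard = 1 := by
      have h := hex_inter_card hhex hf₃ hf₄ (by rw [← hS₃, ← hS₄]; exact neq34)
        (v := v') (by rw [← hS₃]; exact hv3) (by rw [← hS₄]; exact hv4)
      rw [hS₃, hS₄]; exact h
    have hI34 : symmDiff M₃ M₄ ∩ symmDiff M₄ M₁ = {e4} :=
      eq_singleton_of_mem_of_ncard_eq_one hcard34 ⟨he4S3, he4S4⟩
    -- pigeonhole: S₃ shares at least 3 edges with S₁ or with S₂
    have hS3C : symmDiff M₃ M₄ \ {e4} ⊆ symmDiff (symmDiff M₁ M₂) (symmDiff M₂ M₃) := by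
      intro d hd
      rw [hC, Set.mem_symmDiff]
      refine Or.inl ⟨hd.1, ?_⟩
      intro h4
      have hmem : d ∈ symmDiff M₃ M₄ ∩ symmDiff M₄ M₁ := ⟨hd.1, h4⟩
      rw [hI34] at hmem
      exact hd.2 hmem
    have hCsub := sd_subset_union (symmDiff M₁ M₂) (symmDiff M₂ M₃)
    set C := symmDiff (symmDiff M₁ M₂) (symmDiff M₂ M₃) with hCdef
    have hsplit : symmDiff M₃ M₄ ∩ C =
        (symmDiff M₃ M₄ ∩ C ∩ symmDiff M₁ M₂) ∪ (symmDiff M₃ M₄ ∩ C ∩ symmDiff M₂ M₃) := by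
      ext d
      simp only [Set.mem_inter_iff, Set.mem_union]
      constructor
      · intro ⟨hd3, hdC⟩
        rcases hCsub hdC with h | h
        · exact Or.inl ⟨⟨hd3, hdC⟩, h⟩
        · exact Or.inr ⟨⟨hd3, hdC⟩, h⟩
      · rintro (⟨h, -⟩ | ⟨h, -⟩) <;> exact h
    have hdisjab : Disjoint (symmDiff M₃ M₄ ∩ C ∩ symmDiff M₁ M₂)
        (symmDiff M₃ M₄ ∩ C ∩ symmDiff M₂ M₃) := by
      rw [Set.disjoint_iff_inter_eq_empty]
      ext d
      simp only [Set.mem_inter_iff, Set.mem_empty_iff_false, iff_false, not_and]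
      intro h1 hd3' hd2
      have hmem : d ∈ symmDiff M₁ M₂ ∩ symmDiff M₂ M₃ := ⟨h1.2, hd2⟩
      rw [hI12] at hmem
      simp only [Set.mem_singleton_iff] at hmem
      subst hmem
      exact heC h1.1.2
    have hab : (symmDiff M₃ M₄ ∩ C).ncard = (symmDiff M₃ M₄ ∩ C ∩ symmDiff M₁ M₂).ncard
        + (symmDiff M₃ M₄ ∩ C ∩ symmDiff M₂ M₃).ncard := by
      conv_lhs => rw [hsplit]
      exact Set.ncard_union_eq hdisjab (Set.toFinite _) (Set.toFinite _)
    have h5 : 5 ≤ (symmDiff M₃ M₄ ∩ C).ncard := by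
      have hsub : symmDiff M₃ M₄ \ {e4} ⊆ symmDiff M₃ M₄ ∩ C := fun d hd => ⟨hd.1, hS3C hd⟩
      have h1 : (symmDiff M₃ M₄ \ {e4}).ncard = 5 := by
        rw [Set.ncard_diff_singleton_of_mem he4S3, n3]
      have := Set.ncard_le_ncard hsub (Set.toFinite _)
      omega
    have hmono1 : (symmDiff M₃ M₄ ∩ C ∩ symmDiff M₁ M₂).ncard
        ≤ (symmDiff M₃ M₄ ∩ symmDiff M₁ M₂).ncard :=
      Set.ncard_le_ncard (fun d hd => ⟨hd.1.1, hd.2⟩) (Set.toFinite _)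
    have hmono2 : (symmDiff M₃ M₄ ∩ C ∩ symmDiff M₂ M₃).ncard
        ≤ (symmDiff M₃ M₄ ∩ symmDiff M₂ M₃).ncard :=
      Set.ncard_le_ncard (fun d hd => ⟨hd.1.1, hd.2⟩) (Set.toFinite _)
    have hkey : 3 ≤ (symmDiff M₃ M₄ ∩ symmDiff M₁ M₂).ncard ∨
        3 ≤ (symmDiff M₃ M₄ ∩ symmDiff M₂ M₃).ncard := by omega
    have shared_vertex : ∀ (S S' : Set (Sym2 V)), (S ∩ S').Nonempty →
        ∃ x, x ∈ VS S ∧ x ∈ VS S' := by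
      intro S S' hSS
      obtain ⟨d, hd, hd'⟩ := hSS
      induction d using Sym2.ind with
      | _ x y =>
        exact ⟨x, ⟨_, hd, Sym2.mem_mk_left _ _⟩, ⟨_, hd', Sym2.mem_mk_left _ _⟩⟩
    rcases hkey with hk | hk
    · -- S₃ shares ≥ 3 edges with S₁
      by_cases hS31 : symmDiff M₃ M₄ = symmDiff M₁ M₂
      · -- then S₄ = S₂; contradiction via the M₁-edge at v
        have h41eq : symmDiff M₄ M₁ = symmDiff M₂ M₃ := sd_swap' hS31
        have hv4' : v ∈ VS (symmDiff M₁ M₄) := by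
          rw [symmDiff_comm, h41eq]
          exact hv2
        obtain ⟨e1, ⟨he1M1, hve1⟩, he1M4⟩ := matching_edge_mem hM₁ hM₄ hv4'
        obtain ⟨e1', ⟨he1'M1, hve1'⟩, he1'M2⟩ := matching_edge_mem hM₁ hM₂ hv1
        have he11 : e1 = e1' := by
          obtain ⟨w, -, hu⟩ := hM₁.2 v
          rw [hu e1 ⟨he1M1, hve1⟩, hu e1' ⟨he1'M1, hve1'⟩]
        subst he11
        have he1S1 : e1 ∈ symmDiff M₁ M₂ := Set.mem_symmDiff.mpr (Or.inl ⟨he1'M1, he1'M2⟩)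
        have he1S2 : e1 ∈ symmDiff M₂ M₃ := by
          rw [← h41eq]
          exact Set.mem_symmDiff.mpr (Or.inr ⟨he1M1, he1M4⟩)
        have hmem : e1 ∈ symmDiff M₁ M₂ ∩ symmDiff M₂ M₃ := ⟨he1S1, he1S2⟩
        rw [hI12] at hmem
        simp only [Set.mem_singleton_iff] at hmem
        subst hmem
        exact heM1 he1'M1
      · -- they share ≥ 3 edges yet are distinct: contradicts hhex
        have hne3 : (symmDiff M₃ M₄ ∩ symmDiff M₁ M₂).Nonempty := by
          rw [← Set.ncard_pos (Set.toFinite _)]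
          omega
        obtain ⟨x, hx3, hx1⟩ := shared_vertex _ _ hne3
        have h := hex_inter_card hhex hf₃ hf₁ (by rw [← hS₃, ← hS₁]; exact hS31)
          (v := x) (by rw [← hS₃]; exact hx3) (by rw [← hS₁]; exact hx1)
        rw [← hS₃, ← hS₁] at h
        omega
    · -- S₃ shares ≥ 3 edges with S₂
      by_cases hS32 : symmDiff M₃ M₄ = symmDiff M₂ M₃
      · exact h24 (sd_cancel_out hS32).symm
      · have hne3 : (symmDiff M₃ M₄ ∩ symmDiff M₂ M₃).Nonempty := by
          rw [← Set.ncard_pos (Set.toFinite _)]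
          omega
        obtain ⟨x, hx3, hx2⟩ := shared_vertex _ _ hne3
        have h := hex_inter_card hhex hf₃ hf₂ (by rw [← hS₃, ← hS₂]; exact hS32)
          (v := x) (by rw [← hS₃]; exact hx3) (by rw [← hS₂]; exact hx2)
        rw [← hS₃, ← hS₂] at h
        omega
end

section
/- Let G be a finite simple graph. Then the derivative of the Clar covering polynomial of G satisfies ζ'(G,x) = Σ_h ζ(G − V(h), x), where the summation runs over all 6-cycles h of G and G − V(h) denotes the graph obtained from G by deleting the six vertices of h together with all incident edges. Equivalently, k·z(G,k) = Σ_h z(G − V(h), k−1) for every positive integer k. -/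
open SimpleGraph Polynomial

/-- `z(G,k)`: the number of Clar covers of `G` with exactly `k` hexagon
components. -/
noncomputable def clarCount {V : Type*} (G : SimpleGraph V) (k : ℕ) : ℕ :=
  Nat.card {H : SimpleGraph V // IsClarCover G H ∧ hexCount H = k}

/-- The Clar covering polynomial `ζ(G,x) = Σ_k z(G,k)·xᵏ` of `G`.  (A Clar
cover with `k` hexagons has `6k` vertices, so `z(G,k) = 0` for `k > |V|` and
the range of summation captures all nonzero terms.) -/
noncomputable def clarPoly {V : Type*} (G : SimpleGraph V) : Polynomial ℤ :=
  ∑ k ∈ Finset.range (Nat.card V + 1), Polynomial.C (clarCount G k : ℤ) * Polynomial.X ^ k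

/-- The set of vertices lying on an edge of `E`. -/
def edgeSupp {V : Type*} (E : Set (Sym2 V)) : Set V :=
  {v | ∃ e ∈ E, v ∈ e}


section ClosedSets

variable {V : Type*} {H : SimpleGraph V} {S : Set V}

/-- `S` is closed under adjacency in `H`. -/
def AdjClosed (H : SimpleGraph V) (S : Set V) : Prop :=
  ∀ ⦃u v : V⦄, H.Adj u v → (u ∈ S ↔ v ∈ S)

lemma AdjClosed.compl (hS : AdjClosed H S) : AdjClosed H Sᶜ :=
  fun _ _ h => by simp [hS h]

lemma AdjClosed.mem_of_reachable (hS : AdjClosed H S) {u v : V}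
    (h : H.Reachable u v) (hu : u ∈ S) : v ∈ S := by
  obtain ⟨w⟩ := h
  induction w with
  | nil => exact hu
  | cons h p ih => exact ih ((hS h).mp hu)

lemma AdjClosed.reachable_induce_of_walk (hS : AdjClosed H S) {x y : V}
    (w : H.Walk x y) (hx : x ∈ S) (hy : y ∈ S) :
    (H.induce S).Reachable ⟨x, hx⟩ ⟨y, hy⟩ := by
  induction w with
  | nil => rfl
  | @cons a b c h p ih =>
      have hb : b ∈ S := (hS h).mp hx
      have : (H.induce S).Adj ⟨a, hx⟩ ⟨b, hb⟩ := h
      exact this.reachable.trans (ih hb hy)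

lemma AdjClosed.reachable_induce_iff (hS : AdjClosed H S) {a b : S} :
    (H.induce S).Reachable a b ↔ H.Reachable (a : V) (b : V) := by
  constructor
  · intro h
    simpa using h.map (SimpleGraph.Embedding.induce S).toHom
  · intro h
    obtain ⟨w⟩ := h
    have := hS.reachable_induce_of_walk w a.2 b.2
    simpa using this

/-- The map on connected components induced by the inclusion of `H.induce S` into `H`. -/
noncomputable def AdjClosed.compMap (_hS : AdjClosed H S)
    (d : (H.induce S).ConnectedComponent) : H.ConnectedComponent :=
  d.map (SimpleGraph.Embedding.induce S).toHom

lemma AdjClosed.compMap_mk (hS : AdjClosed H S) (x : S) :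
    hS.compMap ((H.induce S).connectedComponentMk x) = H.connectedComponentMk (x : V) := rfl

lemma AdjClosed.mem_compMap_supp_iff (hS : AdjClosed H S) (d : (H.induce S).ConnectedComponent)
    (x : S) : (x : V) ∈ (hS.compMap d).supp ↔ x ∈ d.supp := by
  induction d using SimpleGraph.ConnectedComponent.ind with
  | _ a =>
    rw [hS.compMap_mk]
    simp only [SimpleGraph.ConnectedComponent.mem_supp_iff, SimpleGraph.ConnectedComponent.eq]
    exact hS.reachable_induce_iff.symm

lemma AdjClosed.compMap_supp_subset (hS : AdjClosed H S)
    (d : (H.induce S).ConnectedComponent) : (hS.compMap d).supp ⊆ S := by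
  induction d using SimpleGraph.ConnectedComponent.ind with
  | _ a =>
    intro v hv
    rw [hS.compMap_mk] at hv
    simp only [SimpleGraph.ConnectedComponent.mem_supp_iff, SimpleGraph.ConnectedComponent.eq] at hv
    exact hS.mem_of_reachable hv.symm a.2

lemma AdjClosed.compMap_injective (hS : AdjClosed H S) :
    Function.Injective hS.compMap := by
  intro d₁ d₂ h
  induction d₁ using SimpleGraph.ConnectedComponent.ind with
  | _ a =>
  induction d₂ using SimpleGraph.ConnectedComponent.ind with
  | _ b =>
    rw [hS.compMap_mk, hS.compMap_mk] at h
    rw [SimpleGraph.ConnectedComponent.eq] at h ⊢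
    exact hS.reachable_induce_iff.mpr h

lemma AdjClosed.compMap_surjective (hS : AdjClosed H S) {d : H.ConnectedComponent}
    (hd : d.supp ⊆ S) : ∃ d', hS.compMap d' = d := by
  obtain ⟨v, rfl⟩ := d.exists_rep
  have hv : v ∈ S := hd rfl
  exact ⟨(H.induce S).connectedComponentMk ⟨v, hv⟩, rfl⟩

/-- The induced subgraph on a component of `H.induce S` is isomorphic to the induced
subgraph of `H` on the corresponding component of `H`. -/
noncomputable def AdjClosed.suppIso (hS : AdjClosed H S) (d : (H.induce S).ConnectedComponent) :
    (H.induce S).induce d.supp ≃g H.induce (hS.compMap d).supp where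
  toFun x := ⟨(x : S), (hS.mem_compMap_supp_iff d x).mpr x.2⟩
  invFun v := ⟨⟨(v : V), hS.compMap_supp_subset d v.2⟩,
    (hS.mem_compMap_supp_iff d ⟨(v : V), hS.compMap_supp_subset d v.2⟩).mp v.2⟩
  left_inv x := by ext; rfl
  right_inv v := by ext; rfl
  map_rel_iff' := Iff.rfl

end ClosedSets
section HexBasics

variable {V : Type*} {G H : SimpleGraph V} {f : Fin 6 → V}

lemma cycleGraph6_adj {i j : Fin 6} : (cycleGraph 6).Adj i j ↔ j = i + 1 ∨ i = j + 1 := by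
  revert i j; decide

lemma cycleGraph6_adj_succ (i : Fin 6) : (cycleGraph 6).Adj i (i + 1) := by
  revert i; decide

lemma edgeSupp_hexEdges (f : Fin 6 → V) : edgeSupp (hexEdges f) = Set.range f := by
  ext v
  constructor
  · rintro ⟨e, ⟨i, rfl⟩, hv⟩
    rcases Sym2.mem_iff.mp hv with h | h <;> exact ⟨_, h.symm⟩
  · rintro ⟨i, rfl⟩
    exact ⟨s(f i, f (i + 1)), ⟨i, rfl⟩, Sym2.mem_mk_left _ _⟩

lemma hexEdges_mem_iff (hinj : Function.Injective f) {i j : Fin 6} :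
    s(f i, f j) ∈ hexEdges f ↔ j = i + 1 ∨ i = j + 1 := by
  constructor
  · rintro ⟨i', h⟩
    rcases Sym2.eq_iff.mp h with ⟨h1, h2⟩ | ⟨h1, h2⟩
    · exact Or.inl (by rw [hinj h2, hinj h1])
    · exact Or.inr (by rw [hinj h1, hinj h2])
  · rintro (rfl | rfl)
    · exact ⟨i, rfl⟩
    · exact ⟨j, Sym2.eq_swap⟩

lemma IsHexCycle.mono (h : H ≤ G) (hf : IsHexCycle H f) : IsHexCycle G f :=
  ⟨hf.1, fun i => h (hf.2 i)⟩

lemma IsHexCycle.adj_of_mem_hexEdges (hf : IsHexCycle G f) {u v : V}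
    (h : s(u, v) ∈ hexEdges f) : G.Adj u v := by
  obtain ⟨i, h⟩ := h
  rcases Sym2.eq_iff.mp h with ⟨rfl, rfl⟩ | ⟨rfl, rfl⟩
  · exact hf.2 i
  · exact (hf.2 i).symm

/-- A hexagon component of `H` carries a 6-cycle of `H` whose range is the component
and whose edges are the component's edges. -/
lemma IsHexComp.exists_cycle {c : H.ConnectedComponent} (hc : IsHexComp H c) :
    ∃ f : Fin 6 → V, IsHexCycle H f ∧ Set.range f = c.supp ∧ compEdges H c = hexEdges f := by
  obtain ⟨φ⟩ := hc
  set f : Fin 6 → V := fun i => ((φ.symm i : c.supp) : V) with hf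
  have hmemf : ∀ i, f i ∈ c.supp := fun i => (φ.symm i).2
  have hsub : ∀ (v : V) (hv : v ∈ c.supp), f (φ ⟨v, hv⟩) = v := by
    intro v hv
    simp [hf]
  have hrange : Set.range f = c.supp := by
    ext v
    constructor
    · rintro ⟨i, rfl⟩; exact hmemf i
    · intro hv; exact ⟨φ ⟨v, hv⟩, hsub v hv⟩
  have hinj : Function.Injective f := by
    intro i j h
    have : φ.symm i = φ.symm j := Subtype.ext h
    simpa using congrArg φ this
  have hadjiff : ∀ i j : Fin 6, H.Adj (f i) (f j) ↔ (cycleGraph 6).Adj i j := by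
    intro i j
    have : (H.induce c.supp).Adj (φ.symm i) (φ.symm j) ↔ (cycleGraph 6).Adj i j := by
      rw [← φ.map_adj_iff]
      simp
    rw [← this]
    rfl
  have hadj : ∀ i : Fin 6, H.Adj (f i) (f (i + 1)) := fun i =>
    (hadjiff i (i + 1)).mpr (cycleGraph6_adj_succ i)
  refine ⟨f, ⟨hinj, hadj⟩, hrange, ?_⟩
  ext e
  induction e with
  | _ u v =>
    constructor
    · rintro ⟨he, hmem⟩
      have hu : u ∈ c.supp := hmem u (Sym2.mem_mk_left _ _)
      have hv : v ∈ c.supp := hmem v (Sym2.mem_mk_right _ _)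
      obtain ⟨i, rfl⟩ : u ∈ Set.range f := hrange ▸ hu
      obtain ⟨j, rfl⟩ : v ∈ Set.range f := hrange ▸ hv
      have : (cycleGraph 6).Adj i j := (hadjiff i j).mp he
      exact (hexEdges_mem_iff hinj).mpr (cycleGraph6_adj.mp this)
    · rintro ⟨i, h⟩
      refine ⟨?_, ?_⟩
      · rcases Sym2.eq_iff.mp h with ⟨rfl, rfl⟩ | ⟨rfl, rfl⟩
        · exact hadj i
        · exact (hadj i).symm
      · intro w hw
        rw [h] at hw
        rcases Sym2.mem_iff.mp hw with rfl | rfl <;> exact hmemf _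

end HexBasics
section Counting

lemma nat_card_subtype_succ {β : Type*} [Finite β] {Q : β → Prop} {b₀ : β} (hb₀ : Q b₀) :
    Nat.card {b // Q b} = Nat.card {b // Q b ∧ b ≠ b₀} + 1 := by
  classical
  have e : {b // Q b} ≃ {b // Q b ∧ b ≠ b₀} ⊕ PUnit.{1} := by
    refine
      { toFun := fun b => if h : b.1 = b₀ then Sum.inr PUnit.unit else Sum.inl ⟨b.1, b.2, h⟩
        invFun := fun x => x.elim (fun b => ⟨b.1, b.2.1⟩) (fun _ => ⟨b₀, hb₀⟩)
        left_inv := fun b => ?_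
        right_inv := fun x => ?_ }
    · by_cases h : b.1 = b₀ <;> simp [h] <;> exact (Subtype.ext h).symm
    · rcases x with b | ⟨⟩
      · simp [b.2.2]
      · simp
  rw [Nat.card_congr e, Nat.card_sum]
  simp [Nat.card_unique]

variable {V : Type*} {H : SimpleGraph V} {T : Set V} {c : H.ConnectedComponent}

lemma adjClosed_supp (H : SimpleGraph V) (c : H.ConnectedComponent) : AdjClosed H c.supp := by
  intro u v h
  simp only [SimpleGraph.ConnectedComponent.mem_supp_iff]
  rw [SimpleGraph.ConnectedComponent.connectedComponentMk_eq_of_adj h]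

lemma AdjClosed.isHexComp_iff (hT : AdjClosed H T) (d : (H.induce T).ConnectedComponent) :
    IsHexComp (H.induce T) d ↔ IsHexComp H (hT.compMap d) := by
  constructor
  · rintro ⟨ψ⟩; exact ⟨((hT.suppIso d).symm.trans ψ : _)⟩
  · rintro ⟨ψ⟩; exact ⟨((hT.suppIso d).trans ψ : _)⟩

lemma AdjClosed.isEdgeComp_iff (hT : AdjClosed H T) (d : (H.induce T).ConnectedComponent) :
    IsEdgeComp (H.induce T) d ↔ IsEdgeComp H (hT.compMap d) := by
  constructor
  · rintro ⟨ψ⟩; exact ⟨((hT.suppIso d).symm.trans ψ : _)⟩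
  · rintro ⟨ψ⟩; exact ⟨((hT.suppIso d).trans ψ : _)⟩

/-- If `T` is the complement of the support of the component `c`, then components of
`H.induce T` correspond exactly to components of `H` distinct from `c`. -/
lemma AdjClosed.compMap_ne (hT : AdjClosed H T) (hTc : ∀ v, v ∈ T ↔ v ∉ c.supp)
    (d : (H.induce T).ConnectedComponent) : hT.compMap d ≠ c := by
  intro h
  obtain ⟨v, hv⟩ := c.exists_rep
  have hvc : v ∈ c.supp := hv
  have hvd : v ∈ (hT.compMap d).supp := by rw [h]; exact hvc
  have : v ∈ T := hT.compMap_supp_subset d hvd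
  exact (hTc v).mp this hvc

lemma AdjClosed.supp_subset_of_ne (hT : AdjClosed H T) (hTc : ∀ v, v ∈ T ↔ v ∉ c.supp)
    {d : H.ConnectedComponent} (hd : d ≠ c) : d.supp ⊆ T := by
  intro v hv
  rw [hTc v]
  intro hvc
  exact hd (hv.symm.trans hvc)

/-- The hexagon components of `H.induce T` are equivalent to hexagon components of `H`
other than `c`. -/
noncomputable def AdjClosed.hexCompEquiv (hT : AdjClosed H T) (hTc : ∀ v, v ∈ T ↔ v ∉ c.supp) :
    {d : (H.induce T).ConnectedComponent // IsHexComp (H.induce T) d} ≃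
      {d : H.ConnectedComponent // IsHexComp H d ∧ d ≠ c} := by
  apply Equiv.ofBijective
    (fun d => ⟨hT.compMap d.1, (hT.isHexComp_iff d.1).mp d.2, hT.compMap_ne hTc d.1⟩)
  constructor
  · intro d₁ d₂ h
    exact Subtype.ext (hT.compMap_injective (congrArg Subtype.val h))
  · rintro ⟨d, hd, hne⟩
    obtain ⟨d', hd'⟩ := hT.compMap_surjective (hT.supp_subset_of_ne hTc hne)
    exact ⟨⟨d', (hT.isHexComp_iff d').mpr (hd' ▸ hd)⟩, Subtype.ext hd'⟩

lemma hexCount_eq_succ [Finite V] (hT : AdjClosed H T) (hTc : ∀ v, v ∈ T ↔ v ∉ c.supp)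
    (hc : IsHexComp H c) : hexCount H = hexCount (H.induce T) + 1 := by
  have : Finite H.ConnectedComponent := Quot.finite _
  rw [hexCount, nat_card_subtype_succ (b₀ := c) hc, hexCount,
    Nat.card_congr (hT.hexCompEquiv hTc)]

end Counting
section LiftCover

variable {V : Type*}

/-- Glue a hexagon with edge set `E` onto a graph `H'` on the complement of its support. -/
def liftCover (E : Set (Sym2 V)) (H' : SimpleGraph {v : V | v ∉ edgeSupp E}) :
    SimpleGraph V where
  Adj u v := u ≠ v ∧ (s(u, v) ∈ E ∨
    ∃ (hu : u ∈ {v : V | v ∉ edgeSupp E}) (hv : v ∈ {v : V | v ∉ edgeSupp E}),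
      H'.Adj ⟨u, hu⟩ ⟨v, hv⟩)
  symm := ⟨by
    rintro u v ⟨hne, h | ⟨hu, hv, h⟩⟩
    · exact ⟨hne.symm, Or.inl (Sym2.eq_swap ▸ h)⟩
    · exact ⟨hne.symm, Or.inr ⟨hv, hu, h.symm⟩⟩⟩
  loopless := ⟨fun v h => h.1 rfl⟩

variable {G : SimpleGraph V} {E : Set (Sym2 V)} {H' : SimpleGraph {v : V | v ∉ edgeSupp E}}
  {f : Fin 6 → V}

lemma liftCover_le (hE : IsHexagon G E) (hH' : H' ≤ G.induce {v : V | v ∉ edgeSupp E}) :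
    liftCover E H' ≤ G := by
  rintro u v ⟨hne, h | ⟨hu, hv, h⟩⟩
  · obtain ⟨f, hf, rfl⟩ := hE
    exact hf.adj_of_mem_hexEdges h
  · exact hH' h

lemma adjClosed_liftCover (E : Set (Sym2 V)) (H' : SimpleGraph {v : V | v ∉ edgeSupp E}) :
    AdjClosed (liftCover E H') (edgeSupp E) := by
  rintro u v ⟨hne, h | ⟨hu, hv, h⟩⟩
  · exact iff_of_true ⟨_, h, Sym2.mem_mk_left _ _⟩ ⟨_, h, Sym2.mem_mk_right _ _⟩
  · exact iff_of_false hu hv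

lemma induce_liftCover (E : Set (Sym2 V)) (H' : SimpleGraph {v : V | v ∉ edgeSupp E}) :
    (liftCover E H').induce {v : V | v ∉ edgeSupp E} = H' := by
  ext ⟨u, hu⟩ ⟨v, hv⟩
  show (liftCover E H').Adj u v ↔ _
  constructor
  · rintro ⟨hne, h | ⟨hu', hv', h⟩⟩
    · exact absurd ⟨_, h, Sym2.mem_mk_left _ _⟩ hu
    · convert h
  · intro h
    exact ⟨fun he => h.ne (Subtype.ext he), Or.inr ⟨hu, hv, h⟩⟩

lemma isHexCycle_liftCover (hinj : Function.Injective f) (hEf : E = hexEdges f) :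
    IsHexCycle (liftCover E H') f := by
  refine ⟨hinj, fun i => ⟨fun h => ?_, Or.inl (hEf ▸ ⟨i, rfl⟩)⟩⟩
  have : i = i + 1 := hinj h
  simp at this

lemma IsHexCycle.reachable {K : SimpleGraph V} (hf : IsHexCycle K f) (i : Fin 6) :
    K.Reachable (f 0) (f i) := by
  have a : ∀ j : Fin 6, K.Reachable (f j) (f (j + 1)) := fun j => (hf.2 j).reachable
  have r1 : K.Reachable (f 0) (f 1) := a 0
  have r2 : K.Reachable (f 0) (f 2) := r1.trans (a 1)
  have r3 : K.Reachable (f 0) (f 3) := r2.trans (a 2)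
  have r4 : K.Reachable (f 0) (f 4) := r3.trans (a 3)
  have r5 : K.Reachable (f 0) (f 5) := r4.trans (a 4)
  fin_cases i
  exacts [Reachable.refl _, r1, r2, r3, r4, r5]

/-- The induced graph on the range of a chordless 6-cycle is isomorphic to `cycleGraph 6`. -/
lemma hexIso {K : SimpleGraph V} (hf : IsHexCycle K f)
    (hch : ∀ i j : Fin 6, K.Adj (f i) (f j) → j = i + 1 ∨ i = j + 1) :
    Nonempty (K.induce (Set.range f) ≃g cycleGraph 6) := by
  refine ⟨{ toEquiv := (Equiv.ofInjective f hf.1).symm, map_rel_iff' := ?_ }⟩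
  intro a b
  obtain ⟨i, rfl⟩ := (Equiv.ofInjective f hf.1).surjective a
  obtain ⟨j, rfl⟩ := (Equiv.ofInjective f hf.1).surjective b
  simp only [Equiv.symm_apply_apply]
  rw [cycleGraph6_adj]
  constructor
  · rintro (rfl | rfl)
    · exact hf.2 i
    · exact (hf.2 j).symm
  · intro h
    exact hch i j h

end LiftCover
section SplitGlue

variable {V : Type*}

lemma split_main [Finite V] {G H : SimpleGraph V} {c : H.ConnectedComponent}
    (hcov : IsClarCover G H) (hc : IsHexComp H c) :
    IsHexagon G (compEdges H c) ∧
    edgeSupp (compEdges H c) = c.supp ∧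
    IsClarCover (G.induce {v : V | v ∉ edgeSupp (compEdges H c)})
      (H.induce {v : V | v ∉ edgeSupp (compEdges H c)}) ∧
    hexCount H = hexCount (H.induce {v : V | v ∉ edgeSupp (compEdges H c)}) + 1 ∧
    liftCover (compEdges H c) (H.induce {v : V | v ∉ edgeSupp (compEdges H c)}) = H := by
  obtain ⟨f, hfc, hrange, hcomp⟩ := hc.exists_cycle
  have h1 : IsHexagon G (compEdges H c) := ⟨f, hfc.mono hcov.1, hcomp⟩
  have h2 : edgeSupp (compEdges H c) = c.supp := by rw [hcomp, edgeSupp_hexEdges, hrange]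
  have hclosedc := adjClosed_supp H c
  have hT : ∀ v, v ∈ {v : V | v ∉ edgeSupp (compEdges H c)} ↔ v ∉ c.supp := by
    intro v; rw [Set.mem_setOf_eq, h2]
  have hW : AdjClosed H {v : V | v ∉ edgeSupp (compEdges H c)} := by
    intro u v h
    rw [hT, hT]
    exact not_congr (hclosedc h)
  have h3 : IsClarCover (G.induce {v : V | v ∉ edgeSupp (compEdges H c)})
      (H.induce {v : V | v ∉ edgeSupp (compEdges H c)}) := by
    refine ⟨fun u v h => hcov.1 h, fun d => ?_⟩
    rcases hcov.2 (hW.compMap d) with hd | hd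
    · exact Or.inl ((hW.isHexComp_iff d).mpr hd)
    · exact Or.inr ((hW.isEdgeComp_iff d).mpr hd)
  have h4 := hexCount_eq_succ hW hT hc
  refine ⟨h1, h2, h3, h4, ?_⟩
  ext u v
  constructor
  · rintro ⟨hne, h | ⟨hu, hv, h⟩⟩
    · exact h.1
    · exact h
  · intro h
    refine ⟨h.ne, ?_⟩
    by_cases hu : u ∈ c.supp
    · have hv : v ∈ c.supp := (hclosedc h).mp hu
      refine Or.inl ⟨h, fun w hw => ?_⟩
      rcases Sym2.mem_iff.mp hw with rfl | rfl
      exacts [hu, hv]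
    · have hv : v ∉ c.supp := fun hv => hu ((hclosedc h).mpr hv)
      exact Or.inr ⟨(hT u).mpr hu, (hT v).mpr hv, h⟩

lemma glue_main [Finite V] {G : SimpleGraph V} {E : Set (Sym2 V)}
    {H' : SimpleGraph {v : V | v ∉ edgeSupp E}}
    (hE : IsHexagon G E) (hcov' : IsClarCover (G.induce {v : V | v ∉ edgeSupp E}) H') :
    IsClarCover G (liftCover E H') ∧
    hexCount (liftCover E H') = hexCount H' + 1 ∧
    (∀ v ∈ edgeSupp E,
      IsHexComp (liftCover E H') ((liftCover E H').connectedComponentMk v) ∧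
      compEdges (liftCover E H') ((liftCover E H').connectedComponentMk v) = E) := by
  obtain ⟨f, hfG, hEf⟩ := hE
  have hinj : Function.Injective f := hfG.1
  set H := liftCover E H' with hH
  have hcyc : IsHexCycle H f := isHexCycle_liftCover hinj hEf
  have hclosed : AdjClosed H (edgeSupp E) := adjClosed_liftCover E H'
  have hES : edgeSupp E = Set.range f := by rw [hEf, edgeSupp_hexEdges]
  have hf0 : f 0 ∈ edgeSupp E := by rw [hES]; exact ⟨0, rfl⟩
  set c₀ := H.connectedComponentMk (f 0) with hc₀
  have hsupp0 : c₀.supp = edgeSupp E := by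
    ext w
    constructor
    · intro hw
      have : H.Reachable w (f 0) := SimpleGraph.ConnectedComponent.exact hw
      exact hclosed.mem_of_reachable this.symm hf0
    · intro hw
      obtain ⟨i, rfl⟩ : w ∈ Set.range f := hES ▸ hw
      exact SimpleGraph.ConnectedComponent.sound (hcyc.reachable i).symm
  have hT : ∀ v, v ∈ {v : V | v ∉ edgeSupp E} ↔ v ∉ c₀.supp := by
    intro v; rw [Set.mem_setOf_eq, hsupp0]
  have hclosedW : AdjClosed H {v : V | v ∉ edgeSupp E} := fun u v h => not_congr (hclosed h)
  have hchord : ∀ i j : Fin 6, H.Adj (f i) (f j) → j = i + 1 ∨ i = j + 1 := by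
    rintro i j ⟨hne, h | ⟨hu, hv, h⟩⟩
    · exact (hexEdges_mem_iff hinj).mp (hEf ▸ h)
    · exact absurd (hES ▸ Set.mem_range_self i) hu
  have hhex0 : IsHexComp H c₀ := by
    unfold IsHexComp
    rw [hsupp0, hES]
    exact hexIso hcyc hchord
  have hind : H.induce {v : V | v ∉ edgeSupp E} = H' := induce_liftCover E H'
  have hclar : IsClarCover G H := by
    refine ⟨liftCover_le ⟨f, hfG, hEf⟩ hcov'.1, fun d => ?_⟩
    by_cases hd : d = c₀
    · exact Or.inl (hd ▸ hhex0)
    · obtain ⟨d', rfl⟩ := hclosedW.compMap_surjective (hclosedW.supp_subset_of_ne hT hd)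
      have h2 := hcov'.2
      rw [← hind] at h2
      rcases h2 d' with hx | hx
      · exact Or.inl ((hclosedW.isHexComp_iff d').mp hx)
      · exact Or.inr ((hclosedW.isEdgeComp_iff d').mp hx)
  have hcount : hexCount H = hexCount H' + 1 := by
    rw [hexCount_eq_succ hclosedW hT hhex0, hind]
  refine ⟨hclar, hcount, fun v hv => ?_⟩
  have hmk : H.connectedComponentMk v = c₀ := by
    have : v ∈ c₀.supp := by rw [hsupp0]; exact hv
    exact this
  refine ⟨hmk ▸ hhex0, ?_⟩
  rw [hmk]
  ext e
  induction e with
  | _ u w =>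
    constructor
    · rintro ⟨he, hm⟩
      rcases he with ⟨hne, h | ⟨hu, hw', h⟩⟩
      · exact h
      · exact absurd (hsupp0 ▸ hm u (Sym2.mem_mk_left _ _)) hu
    · intro h
      have hadj : H.Adj u w := hcyc.adj_of_mem_hexEdges (hEf ▸ h)
      refine ⟨hadj, fun x hx => ?_⟩
      rw [hsupp0]
      exact ⟨_, h, hx⟩

end SplitGlue
section MainEquiv

variable {V : Type*}

lemma sigmaA_ext {H₁ H₂ : SimpleGraph V} {c₁ : H₁.ConnectedComponent}
    {c₂ : H₂.ConnectedComponent} (h : H₁ = H₂) {v : V} (h₁ : v ∈ c₁.supp) (h₂ : v ∈ c₂.supp) :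
    (⟨H₁, c₁⟩ : Σ H : SimpleGraph V, H.ConnectedComponent) = ⟨H₂, c₂⟩ := by
  subst h
  obtain rfl : c₁ = c₂ :=
    ((SimpleGraph.ConnectedComponent.mem_supp_iff _ _).mp h₁).symm.trans
      ((SimpleGraph.ConnectedComponent.mem_supp_iff _ _).mp h₂)
  rfl

lemma sigmaB_ext {E₁ E₂ : Set (Sym2 V)} {H₁ : SimpleGraph {v : V | v ∉ edgeSupp E₁}}
    {H₂ : SimpleGraph {v : V | v ∉ edgeSupp E₂}} (h : E₁ = E₂)
    (h2 : ∀ (u v : V) (hu1 : u ∈ {v : V | v ∉ edgeSupp E₁}) (hv1 : v ∈ {v : V | v ∉ edgeSupp E₁})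
      (hu2 : u ∈ {v : V | v ∉ edgeSupp E₂}) (hv2 : v ∈ {v : V | v ∉ edgeSupp E₂}),
      H₁.Adj ⟨u, hu1⟩ ⟨v, hv1⟩ ↔ H₂.Adj ⟨u, hu2⟩ ⟨v, hv2⟩) :
    (⟨E₁, H₁⟩ : Σ E : Set (Sym2 V), SimpleGraph {v : V | v ∉ edgeSupp E}) = ⟨E₂, H₂⟩ := by
  subst h
  have : H₁ = H₂ := by
    ext ⟨u, hu⟩ ⟨v, hv⟩
    exact h2 u v hu hv hu hv
  rw [this]

lemma IsHexagon.choose_mem {G : SimpleGraph V} {E : Set (Sym2 V)} (hE : IsHexagon G E)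
    (i : Fin 6) : hE.choose i ∈ edgeSupp E := by
  have h : edgeSupp E = Set.range hE.choose :=
    (congrArg edgeSupp hE.choose_spec.2).trans (edgeSupp_hexEdges _)
  exact (Set.ext_iff.mp h _).mpr (Set.mem_range_self i)

variable [Fintype V] (G : SimpleGraph V)

/-- The bijection between Clar covers of `G` with `k` hexagons together with a marked
hexagon component, and hexagons `E` of `G` together with Clar covers of `G - V(E)` with
`k - 1` hexagons. -/
noncomputable def mainEquiv (k : ℕ) (hk : 0 < k) :
    {p : Σ H : SimpleGraph V, H.ConnectedComponent //
        IsClarCover G p.1 ∧ hexCount p.1 = k ∧ IsHexComp p.1 p.2} ≃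
    {q : Σ E : Set (Sym2 V), SimpleGraph {v : V | v ∉ edgeSupp E} //
        IsHexagon G q.1 ∧ IsClarCover (G.induce {v : V | v ∉ edgeSupp q.1}) q.2 ∧
        hexCount q.2 = k - 1} where
  toFun p :=
    ⟨⟨compEdges p.1.1 p.1.2,
      p.1.1.induce {v : V | v ∉ edgeSupp (compEdges p.1.1 p.1.2)}⟩,
      (split_main p.2.1 p.2.2.2).1, (split_main p.2.1 p.2.2.2).2.2.1, by
        dsimp only
        have h4 := (split_main p.2.1 p.2.2.2).2.2.2.1
        have hkk := p.2.2.1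
        omega⟩
  invFun q :=
    ⟨⟨liftCover q.1.1 q.1.2,
      (liftCover q.1.1 q.1.2).connectedComponentMk (q.2.1.choose 0)⟩,
      (glue_main q.2.1 q.2.2.1).1, by
        dsimp only
        have h := (glue_main q.2.1 q.2.2.1).2.1
        have hkk := q.2.2.2
        omega, by
        dsimp only
        exact ((glue_main q.2.1 q.2.2.1).2.2 (q.2.1.choose 0) (q.2.1.choose_mem 0)).1⟩
  left_inv := by
    rintro ⟨⟨H, c⟩, hcov, hkk, hc⟩
    apply Subtype.ext
    refine sigmaA_ext (split_main hcov hc).2.2.2.2 (v := ?_) ?_ ?_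
    · exact ((split_main hcov hc).1).choose 0
    · rfl
    · exact (Set.ext_iff.mp (split_main hcov hc).2.1 _).mp
        (((split_main hcov hc).1).choose_mem 0)
  right_inv := by
    rintro ⟨⟨E, H'⟩, hE, hcov', hkk⟩
    apply Subtype.ext
    have hv0 : hE.choose 0 ∈ edgeSupp E := hE.choose_mem 0
    refine sigmaB_ext ((glue_main hE hcov').2.2 (hE.choose 0) hv0).2 ?_
    intro u v hu1 hv1 hu2 hv2
    have : ((liftCover E H').induce {v : V | v ∉ edgeSupp E}).Adj ⟨u, hu2⟩ ⟨v, hv2⟩ ↔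
        H'.Adj ⟨u, hu2⟩ ⟨v, hv2⟩ := by
      rw [induce_liftCover]
    exact this

end MainEquiv
section Count2

variable {V : Type*} [Fintype V] (G : SimpleGraph V)

lemma card_A (k : ℕ) :
    Nat.card {p : Σ H : SimpleGraph V, H.ConnectedComponent //
        IsClarCover G p.1 ∧ hexCount p.1 = k ∧ IsHexComp p.1 p.2} = clarCount G k * k := by
  classical
  have e : {p : Σ H : SimpleGraph V, H.ConnectedComponent //
        IsClarCover G p.1 ∧ hexCount p.1 = k ∧ IsHexComp p.1 p.2} ≃
      Σ H : {H : SimpleGraph V // IsClarCover G H ∧ hexCount H = k},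
        {c : H.1.ConnectedComponent // IsHexComp H.1 c} :=
    { toFun := fun p => ⟨⟨p.1.1, p.2.1, p.2.2.1⟩, ⟨p.1.2, p.2.2.2⟩⟩
      invFun := fun x => ⟨⟨x.1.1, x.2.1⟩, x.1.2.1, x.1.2.2, x.2.2⟩
      left_inv := fun _ => rfl
      right_inv := fun _ => rfl }
  rw [Nat.card_congr e]
  letI : Fintype {H : SimpleGraph V // IsClarCover G H ∧ hexCount H = k} := Fintype.ofFinite _
  letI : ∀ H : {H : SimpleGraph V // IsClarCover G H ∧ hexCount H = k},
      Fintype {c : H.1.ConnectedComponent // IsHexComp H.1 c} := fun H => Fintype.ofFinite _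
  rw [Nat.card_eq_fintype_card, Fintype.card_sigma]
  have hcard : ∀ H : {H : SimpleGraph V // IsClarCover G H ∧ hexCount H = k},
      Fintype.card {c : H.1.ConnectedComponent // IsHexComp H.1 c} = k := by
    intro H
    rw [← Nat.card_eq_fintype_card]
    exact H.2.2
  rw [Finset.sum_congr rfl fun H _ => hcard H, Finset.sum_const, Finset.card_univ,
    smul_eq_mul, clarCount, Nat.card_eq_fintype_card]

lemma card_B [Fintype {E : Set (Sym2 V) // IsHexagon G E}] (k : ℕ) :
    Nat.card {q : Σ E : Set (Sym2 V), SimpleGraph {v : V | v ∉ edgeSupp E} //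
        IsHexagon G q.1 ∧ IsClarCover (G.induce {v : V | v ∉ edgeSupp q.1}) q.2 ∧
          hexCount q.2 = k} =
      ∑ E : {E : Set (Sym2 V) // IsHexagon G E},
        clarCount (G.induce {v : V | v ∉ edgeSupp E.1}) k := by
  classical
  have e : {q : Σ E : Set (Sym2 V), SimpleGraph {v : V | v ∉ edgeSupp E} //
        IsHexagon G q.1 ∧ IsClarCover (G.induce {v : V | v ∉ edgeSupp q.1}) q.2 ∧
          hexCount q.2 = k} ≃
      Σ E : {E : Set (Sym2 V) // IsHexagon G E},
        {H' : SimpleGraph {v : V | v ∉ edgeSupp E.1} //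
          IsClarCover (G.induce {v : V | v ∉ edgeSupp E.1}) H' ∧ hexCount H' = k} :=
    { toFun := fun q => ⟨⟨q.1.1, q.2.1⟩, ⟨q.1.2, q.2.2.1, q.2.2.2⟩⟩
      invFun := fun x => ⟨⟨x.1.1, x.2.1⟩, x.1.2, x.2.2.1, x.2.2.2⟩
      left_inv := fun _ => rfl
      right_inv := fun _ => rfl }
  rw [Nat.card_congr e]
  letI : ∀ E : {E : Set (Sym2 V) // IsHexagon G E},
      Fintype {H' : SimpleGraph {v : V | v ∉ edgeSupp E.1} //
        IsClarCover (G.induce {v : V | v ∉ edgeSupp E.1}) H' ∧ hexCount H' = k} :=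
    fun E => Fintype.ofFinite _
  rw [Nat.card_eq_fintype_card, Fintype.card_sigma]
  refine Finset.sum_congr rfl fun E _ => ?_
  rw [← Nat.card_eq_fintype_card]
  rfl

/-- The key double-counting identity. -/
lemma key_count (k : ℕ) (hk : 0 < k) :
    k * clarCount G k =
      ∑ᶠ E ∈ {E : Set (Sym2 V) | IsHexagon G E},
        clarCount (G.induce {v : V | v ∉ edgeSupp E}) (k - 1) := by
  classical
  letI : Fintype {E : Set (Sym2 V) // IsHexagon G E} := Fintype.ofFinite _
  have h1 := card_A G k
  have h2 := Nat.card_congr (mainEquiv G k hk)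
  have h3 := card_B G (k - 1)
  have hS : {E : Set (Sym2 V) | IsHexagon G E}.Finite := Set.toFinite _
  rw [finsum_mem_eq_finite_toFinset_sum _ hS,
    Finset.sum_subtype (p := fun E => IsHexagon G E) hS.toFinset (fun x => by simp)
      (fun E => clarCount (G.induce {v : V | v ∉ edgeSupp E}) (k - 1))]
  rw [mul_comm, h1.symm, h2, h3]

end Count2
section Final

lemma hexCount_le {V : Type*} [Finite V] (H : SimpleGraph V) : hexCount H ≤ Nat.card V := by
  refine le_trans (Nat.card_le_card_of_injective Subtype.val Subtype.val_injective) ?_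
  exact Nat.card_le_card_of_surjective H.connectedComponentMk fun c => c.exists_rep

lemma clarCount_eq_zero {V : Type*} [Finite V] (G : SimpleGraph V) {m : ℕ}
    (hm : Nat.card V < m) : clarCount G m = 0 := by
  have : IsEmpty {H : SimpleGraph V // IsClarCover G H ∧ hexCount H = m} := by
    refine ⟨fun H => ?_⟩
    have h := hexCount_le H.1
    rw [H.2.2] at h
    omega
  rw [clarCount, Nat.card_of_isEmpty]

lemma clarPoly_coeff {W : Type*} [Finite W] (G : SimpleGraph W) (m : ℕ) :
    (clarPoly G).coeff m = clarCount G m := by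
  classical
  rw [clarPoly, Polynomial.finset_sum_coeff]
  simp only [Polynomial.coeff_C_mul, Polynomial.coeff_X_pow, mul_ite, mul_one, mul_zero]
  rw [Finset.sum_ite_eq (Finset.range (Nat.card W + 1)) m fun k => ((clarCount G k : ℤ))]
  split_ifs with h
  · rfl
  · rw [Finset.mem_range, not_lt] at h
    rw [clarCount_eq_zero _ (by omega)]
    simp

end Final

/-- The derivative of the Clar covering polynomial of a finite
simple graph `G` satisfies `ζ'(G,x) = Σ_h ζ(G − V(h), x)`, the sum running over
all 6-cycles `h` of `G` (given by their edge sets); equivalently,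
`k·z(G,k) = Σ_h z(G − V(h), k − 1)` for every positive integer `k`. -/
theorem clarPoly_derivative {V : Type*} [Fintype V] (G : SimpleGraph V) :
    (Polynomial.derivative (clarPoly G) =
        ∑ᶠ E ∈ {E : Set (Sym2 V) | IsHexagon G E},
          clarPoly (G.induce {v : V | v ∉ edgeSupp E})) ∧
      (∀ k : ℕ, 0 < k →
        k * clarCount G k =
          ∑ᶠ E ∈ {E : Set (Sym2 V) | IsHexagon G E},
            clarCount (G.induce {v : V | v ∉ edgeSupp E}) (k - 1)) := by
  have hS : {E : Set (Sym2 V) | IsHexagon G E}.Finite := Set.toFinite _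
  refine ⟨?_, fun k hk => key_count G k hk⟩
  apply Polynomial.ext
  intro n
  rw [Polynomial.coeff_derivative, clarPoly_coeff,
    finsum_mem_eq_finite_toFinset_sum _ hS, Polynomial.finset_sum_coeff]
  have key := key_count G (n + 1) (Nat.succ_pos n)
  rw [finsum_mem_eq_finite_toFinset_sum _ hS] at key
  simp only [Nat.add_sub_cancel] at key
  have hc : ∀ E ∈ hS.toFinset,
      (clarPoly (G.induce {v : V | v ∉ edgeSupp E})).coeff n =
        (clarCount (G.induce {v : V | v ∉ edgeSupp E}) n : ℤ) :=
    fun E _ => clarPoly_coeff _ n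
  rw [Finset.sum_congr rfl hc, ← Nat.cast_sum, ← key]
  push_cast
  ring
end

section
/- Let G be a finite simple graph and s a positive integer. Then the s-th derivative of the Clar covering polynomial of G satisfies ζ^{(s)}(G,x) = s! · Σ_R ζ(G − V(R), x), where the summation runs over all s-element sets R of pairwise vertex-disjoint 6-cycles of G, and G − V(R) denotes the graph obtained from G by deleting all vertices lying on the cycles of R together with all incident edges. -/
open SimpleGraph Polynomial

/-! ### Auxiliary infrastructure -/

namespace ClarAux

variable {V : Type*} {V₂ : Type*}

lemma nonempty_iso_congr {A B C : Type*} {X : SimpleGraph A} {Y : SimpleGraph B}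
    {Z : SimpleGraph C} (e : X ≃g Y) : Nonempty (X ≃g Z) ↔ Nonempty (Y ≃g Z) :=
  ⟨fun ⟨i⟩ => ⟨e.symm.trans i⟩, fun ⟨i⟩ => ⟨e.trans i⟩⟩

/-- induced iso on component supports along a graph iso -/
def isoInduceSupp {H : SimpleGraph V} {H₂ : SimpleGraph V₂} (e : H ≃g H₂)
    (c : H.ConnectedComponent) :
    H.induce c.supp ≃g H₂.induce (e.connectedComponentEquiv c).supp where
  toEquiv := ConnectedComponent.isoEquivSupp e c
  map_rel_iff' := by intro a b; exact e.map_rel_iff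

lemma isHexComp_congr {H : SimpleGraph V} {H₂ : SimpleGraph V₂} (e : H ≃g H₂)
    (c : H.ConnectedComponent) :
    IsHexComp H c ↔ IsHexComp H₂ (e.connectedComponentEquiv c) :=
  nonempty_iso_congr (isoInduceSupp e c)

lemma isEdgeComp_congr {H : SimpleGraph V} {H₂ : SimpleGraph V₂} (e : H ≃g H₂)
    (c : H.ConnectedComponent) :
    IsEdgeComp H c ↔ IsEdgeComp H₂ (e.connectedComponentEquiv c) :=
  nonempty_iso_congr (isoInduceSupp e c)

lemma hexCount_congr {H : SimpleGraph V} {H₂ : SimpleGraph V₂} (e : H ≃g H₂) :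
    hexCount H = hexCount H₂ :=
  Nat.card_congr (Equiv.subtypeEquiv e.connectedComponentEquiv fun c => isHexComp_congr e c)

/-- transport of a graph along an equivalence of vertex types -/
def gmap (e : V ≃ V₂) (H : SimpleGraph V) : SimpleGraph V₂ where
  Adj x y := H.Adj (e.symm x) (e.symm y)
  symm := ⟨fun _ _ h => H.adj_symm h⟩
  loopless := ⟨fun x h => H.irrefl h⟩

@[simp] lemma gmap_adj (e : V ≃ V₂) (H : SimpleGraph V) (x y : V₂) :
    (gmap e H).Adj x y ↔ H.Adj (e.symm x) (e.symm y) := Iff.rfl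

/-- a graph is isomorphic to its transport -/
def gmapIso (e : V ≃ V₂) (H : SimpleGraph V) : H ≃g gmap e H where
  toEquiv := e
  map_rel_iff' := by intro a b; simp

@[simp] lemma gmap_gmap (e : V ≃ V₂) (H : SimpleGraph V) :
    gmap e.symm (gmap e H) = H := by
  ext a b; simp

lemma gmap_le_gmap (e : V ≃ V₂) {H G : SimpleGraph V} :
    gmap e H ≤ gmap e G ↔ H ≤ G := by
  constructor
  · intro h a b hab
    have : (gmap e G).Adj (e a) (e b) := h (by simp [hab])
    simpa using this
  · intro h a b hab
    exact h hab

lemma isClarCover_gmap (e : V ≃ V₂) {G H : SimpleGraph V} :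
    IsClarCover (gmap e G) (gmap e H) ↔ IsClarCover G H := by
  constructor
  · rintro ⟨hle, hcomp⟩
    refine ⟨(gmap_le_gmap e).1 hle, fun c => ?_⟩
    rcases hcomp ((gmapIso e H).connectedComponentEquiv c) with h | h
    · exact Or.inl ((isHexComp_congr (gmapIso e H) c).2 h)
    · exact Or.inr ((isEdgeComp_congr (gmapIso e H) c).2 h)
  · rintro ⟨hle, hcomp⟩
    refine ⟨(gmap_le_gmap e).2 hle, fun c => ?_⟩
    rcases hcomp ((gmapIso e H).connectedComponentEquiv.symm c) with h | h
    · refine Or.inl ?_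
      have := (isHexComp_congr (gmapIso e H) ((gmapIso e H).connectedComponentEquiv.symm c)).1 h
      simpa using this
    · refine Or.inr ?_
      have := (isEdgeComp_congr (gmapIso e H) ((gmapIso e H).connectedComponentEquiv.symm c)).1 h
      simpa using this

lemma clarCount_gmap (e : V ≃ V₂) (G : SimpleGraph V) (k : ℕ) :
    clarCount G k = clarCount (gmap e G) k := by
  refine Nat.card_congr (Equiv.subtypeEquiv
    ⟨gmap e, gmap e.symm, fun H => by simp, fun H => by
      simpa using gmap_gmap e.symm H⟩ fun H => ?_)
  simp only [Equiv.coe_fn_mk]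
  constructor
  · rintro ⟨h1, h2⟩
    exact ⟨(isClarCover_gmap e).2 h1, by
      rw [← hexCount_congr (gmapIso e H)]; exact h2⟩
  · rintro ⟨h1, h2⟩
    exact ⟨(isClarCover_gmap e).1 h1, by
      rw [hexCount_congr (gmapIso e H)]; exact h2⟩

lemma clarCount_congr {G : SimpleGraph V} {G₂ : SimpleGraph V₂} (e : G ≃g G₂) (k : ℕ) :
    clarCount G k = clarCount G₂ k := by
  have hG : gmap e.toEquiv G = G₂ := by
    ext a b
    exact e.symm.map_rel_iff
  rw [← hG, ← clarCount_gmap]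

lemma clarPoly_congr {G : SimpleGraph V} {G₂ : SimpleGraph V₂} (e : G ≃g G₂) :
    clarPoly G = clarPoly G₂ := by
  unfold clarPoly
  rw [Nat.card_congr e.toEquiv]
  exact Finset.sum_congr rfl fun k _ => by rw [clarCount_congr e]


/-! ### Walks and closed sets -/

lemma walk_mem_closed {H : SimpleGraph V} {S : Set V}
    (hS : ∀ ⦃u v⦄, H.Adj u v → u ∈ S → v ∈ S) :
    ∀ {a b : V}, H.Walk a b → a ∈ S → b ∈ S := by
  intro a b p
  induction p with
  | nil => exact id
  | cons h _ ih => exact fun ha => ih (hS h ha)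

lemma reachable_induce_of_closed {H : SimpleGraph V} {S : Set V}
    (hS : ∀ ⦃u v⦄, H.Adj u v → u ∈ S → v ∈ S) :
    ∀ {a b : V}, H.Reachable a b → ∀ (ha : a ∈ S), ∃ hb : b ∈ S,
      (H.induce S).Reachable ⟨a, ha⟩ ⟨b, hb⟩ := by
  intro a b h
  obtain ⟨p⟩ := h
  induction p with
  | nil => exact fun ha => ⟨ha, Reachable.refl _⟩
  | @cons u x b h q ih =>
    intro hu
    have hx : x ∈ S := hS h hu
    obtain ⟨hb, hr⟩ := ih hx
    exact ⟨hb, Reachable.trans (Adj.reachable (by exact h)) hr⟩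

lemma reachable_induce_iff {H : SimpleGraph V} {S : Set V}
    (hS : ∀ ⦃u v⦄, H.Adj u v → u ∈ S → v ∈ S) {a b : ↥S} :
    (H.induce S).Reachable a b ↔ H.Reachable a b := by
  constructor
  · intro h
    have := h.map (SimpleGraph.Embedding.induce S).toHom
    simpa using this
  · intro h
    obtain ⟨hb, hr⟩ := reachable_induce_of_closed hS h a.2
    convert hr <;> simp

/-! ### Splitting off one component -/

section Split

variable {H : SimpleGraph V} (c₀ : H.ConnectedComponent)

/-- complement of the support of a component -/
abbrev Wc (c₀ : H.ConnectedComponent) : Set V := {v | v ∉ c₀.supp}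

lemma supp_closed (c : H.ConnectedComponent) :
    ∀ ⦃u v⦄, H.Adj u v → u ∈ c.supp → v ∈ c.supp := by
  intro u v h hu
  rw [ConnectedComponent.mem_supp_iff] at hu ⊢
  rw [← hu]
  exact (ConnectedComponent.connectedComponentMk_eq_of_adj h).symm

lemma Wc_closed : ∀ ⦃u v⦄, H.Adj u v → u ∈ Wc c₀ → v ∈ Wc c₀ := by
  intro u v h hu hv
  exact hu (supp_closed c₀ h.symm hv)

/-- map from components of the induced graph on `Wc c₀` to components of `H` -/
noncomputable def phiC (c' : (H.induce (Wc c₀)).ConnectedComponent) : H.ConnectedComponent :=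
  c'.map (SimpleGraph.Embedding.induce (Wc c₀)).toHom

@[simp] lemma phiC_mk (x : ↥(Wc c₀)) :
    phiC c₀ ((H.induce (Wc c₀)).connectedComponentMk x) = H.connectedComponentMk x.1 := rfl

lemma supp_phiC (c' : (H.induce (Wc c₀)).ConnectedComponent) :
    (phiC c₀ c').supp = Subtype.val '' c'.supp := by
  refine ConnectedComponent.ind (fun x => ?_) c'
  ext v
  simp only [phiC_mk, ConnectedComponent.mem_supp_iff, Set.mem_image]
  constructor
  · intro h
    have hr : H.Reachable x.1 v := (ConnectedComponent.eq.1 h).symm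
    obtain ⟨hv, hr'⟩ := reachable_induce_of_closed (Wc_closed c₀) hr x.2
    refine ⟨⟨v, hv⟩, ?_, rfl⟩
    simp only [ConnectedComponent.mem_supp_iff, ConnectedComponent.eq]
    convert hr'.symm <;> simp
  · rintro ⟨y, hy, rfl⟩
    simp only [ConnectedComponent.mem_supp_iff, ConnectedComponent.eq] at hy
    have := hy.map (SimpleGraph.Embedding.induce (Wc c₀)).toHom
    exact ConnectedComponent.sound (by simpa using this)

lemma phiC_injective : Function.Injective (phiC c₀) := by
  intro c₁ c₂ h
  refine ConnectedComponent.ind₂ (fun x y hxy => ?_) c₁ c₂ h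
  simp only [phiC_mk, ConnectedComponent.eq] at hxy
  exact ConnectedComponent.sound ((reachable_induce_iff (Wc_closed c₀)).2 hxy)

lemma supp_nonempty (c : H.ConnectedComponent) : c.supp.Nonempty := by
  refine ConnectedComponent.ind (fun v => ⟨v, ?_⟩) c
  simp

lemma phiC_ne (c' : (H.induce (Wc c₀)).ConnectedComponent) : phiC c₀ c' ≠ c₀ := by
  intro h
  obtain ⟨v, hv⟩ := supp_nonempty c'
  have h1 : v.1 ∈ (phiC c₀ c').supp := by rw [supp_phiC]; exact ⟨v, hv, rfl⟩
  rw [h] at h1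
  exact v.2 h1

/-- components of the induced graph correspond to components other than `c₀` -/
noncomputable def compEquiv :
    (H.induce (Wc c₀)).ConnectedComponent ≃ {c : H.ConnectedComponent // c ≠ c₀} := by
  refine Equiv.ofBijective (fun c' => ⟨phiC c₀ c', phiC_ne c₀ c'⟩) ⟨?_, ?_⟩
  · intro a b h
    exact phiC_injective c₀ (congrArg Subtype.val h)
  · rintro ⟨c, hc⟩
    obtain ⟨v, hv⟩ := c.exists_rep
    have hvW : v ∈ Wc c₀ := by
      intro hmem
      rw [ConnectedComponent.mem_supp_iff] at hmem
      exact hc (by rw [← hv]; exact hmem)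
    refine ⟨(H.induce (Wc c₀)).connectedComponentMk ⟨v, hvW⟩, ?_⟩
    apply Subtype.ext
    exact hv

@[simp] lemma compEquiv_val (c' : (H.induce (Wc c₀)).ConnectedComponent) :
    (compEquiv c₀ c' : H.ConnectedComponent) = phiC c₀ c' := rfl

lemma mem_val_image {S : Set V} {T : Set ↥S} {v : V} (h : v ∈ Subtype.val '' T) :
    ∃ hv : v ∈ S, (⟨v, hv⟩ : ↥S) ∈ T := by
  obtain ⟨x, hx, rfl⟩ := h
  exact ⟨x.2, by simpa using hx⟩

/-- iso between a component of the induced graph and its image component -/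
noncomputable def isoComp (c' : (H.induce (Wc c₀)).ConnectedComponent) :
    (H.induce (Wc c₀)).induce c'.supp ≃g H.induce (phiC c₀ c').supp where
  toEquiv :=
    { toFun := fun x => ⟨x.1.1, by rw [supp_phiC]; exact ⟨x.1, x.2, rfl⟩⟩
      invFun := fun y =>
        ⟨⟨y.1, (mem_val_image (by rw [← supp_phiC]; exact y.2)).choose⟩,
          (mem_val_image (by rw [← supp_phiC]; exact y.2)).choose_spec⟩
      left_inv := fun x => Subtype.ext (Subtype.ext rfl)
      right_inv := fun y => Subtype.ext rfl }
  map_rel_iff' := Iff.rfl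

lemma isHexComp_phiC (c' : (H.induce (Wc c₀)).ConnectedComponent) :
    IsHexComp (H.induce (Wc c₀)) c' ↔ IsHexComp H (phiC c₀ c') :=
  nonempty_iso_congr (isoComp c₀ c')

lemma isEdgeComp_phiC (c' : (H.induce (Wc c₀)).ConnectedComponent) :
    IsEdgeComp (H.induce (Wc c₀)) c' ↔ IsEdgeComp H (phiC c₀ c') :=
  nonempty_iso_congr (isoComp c₀ c')


lemma phiC_symm_val (c : H.ConnectedComponent) (h : c ≠ c₀) :
    phiC c₀ ((compEquiv c₀).symm ⟨c, h⟩) = c :=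
  congrArg Subtype.val ((compEquiv c₀).apply_symm_apply ⟨c, h⟩)

/-- equiv between hexagon components of the induced graph and hexagon
components of `H` other than `c₀` -/
noncomputable def hexCompEquiv :
    {c' : (H.induce (Wc c₀)).ConnectedComponent // IsHexComp (H.induce (Wc c₀)) c'} ≃
      {x : {c : H.ConnectedComponent // IsHexComp H c} // x.1 ≠ c₀} where
  toFun p := ⟨⟨phiC c₀ p.1, (isHexComp_phiC c₀ p.1).1 p.2⟩, phiC_ne c₀ p.1⟩
  invFun q := ⟨(compEquiv c₀).symm ⟨q.1.1, q.2⟩, by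
    rw [isHexComp_phiC, phiC_symm_val]
    exact q.1.2⟩
  left_inv p := by
    apply Subtype.ext
    have h2 : (⟨phiC c₀ p.1, phiC_ne c₀ p.1⟩ : {c : H.ConnectedComponent // c ≠ c₀}) =
        compEquiv c₀ p.1 := Subtype.ext rfl
    show (compEquiv c₀).symm _ = p.1
    rw [h2, Equiv.symm_apply_apply]
  right_inv q := by
    apply Subtype.ext
    apply Subtype.ext
    exact phiC_symm_val c₀ q.1.1 q.2

lemma hexCount_split [Finite V] (hc₀ : IsHexComp H c₀) :
    hexCount H = hexCount (H.induce (Wc c₀)) + 1 := by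
  classical
  have e1 : {c : H.ConnectedComponent // IsHexComp H c} ≃
      {x : {c : H.ConnectedComponent // IsHexComp H c} // x.1 ≠ c₀} ⊕
        {x : {c : H.ConnectedComponent // IsHexComp H c} // ¬ x.1 ≠ c₀} :=
    (Equiv.sumCompl _).symm
  rw [hexCount, Nat.card_congr e1, Nat.card_sum]
  congr 1
  · exact (Nat.card_congr (hexCompEquiv c₀)).symm
  · rw [Nat.card_eq_one_iff_unique]
    refine ⟨⟨?_⟩, ⟨⟨⟨c₀, hc₀⟩, by simp⟩⟩⟩
    rintro ⟨⟨c, hcx⟩, h⟩ ⟨⟨d, hd⟩, h2⟩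
    rw [not_not] at h h2
    apply Subtype.ext
    apply Subtype.ext
    show c = d
    simp only [Subtype.coe_mk] at h h2
    exact h.trans h2.symm

lemma cover_induce (hcov : ∀ c : H.ConnectedComponent, IsHexComp H c ∨ IsEdgeComp H c)
    (c' : (H.induce (Wc c₀)).ConnectedComponent) :
    IsHexComp (H.induce (Wc c₀)) c' ∨ IsEdgeComp (H.induce (Wc c₀)) c' := by
  rcases hcov (phiC c₀ c') with h | h
  · exact Or.inl ((isHexComp_phiC c₀ c').2 h)
  · exact Or.inr ((isEdgeComp_phiC c₀ c').2 h)

lemma cover_of_induce (hc₀ : IsHexComp H c₀ ∨ IsEdgeComp H c₀)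
    (hcov : ∀ c' : (H.induce (Wc c₀)).ConnectedComponent,
      IsHexComp (H.induce (Wc c₀)) c' ∨ IsEdgeComp (H.induce (Wc c₀)) c')
    (c : H.ConnectedComponent) : IsHexComp H c ∨ IsEdgeComp H c := by
  by_cases h : c = c₀
  · subst h; exact hc₀
  · rcases hcov ((compEquiv c₀).symm ⟨c, h⟩) with hh | hh
    · exact Or.inl ((phiC_symm_val c₀ c h) ▸ (isHexComp_phiC _ _).1 hh)
    · exact Or.inr ((phiC_symm_val c₀ c h) ▸ (isEdgeComp_phiC _ _).1 hh)

end Split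

lemma induce_le_induce {H G : SimpleGraph V} (hle : H ≤ G) (S : Set V) :
    H.induce S ≤ G.induce S := fun _ _ h => hle h


/-! ### Hexagon components give hexagons -/

lemma cycleGraph6_adj {u v : Fin 6} :
    (cycleGraph 6).Adj u v ↔ u - v = 1 ∨ v - u = 1 :=
  SimpleGraph.cycleGraph_adj (n := 4)

section HexComp

variable {H G : SimpleGraph V} {c : H.ConnectedComponent}

lemma edgeSupp_compEdges (hc : IsHexComp H c) : edgeSupp (compEdges H c) = c.supp := by
  ext v
  constructor
  · rintro ⟨e, ⟨heE, hsupp⟩, hv⟩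
    exact hsupp v hv
  · intro hv
    obtain ⟨i⟩ := hc
    set x : ↥c.supp := ⟨v, hv⟩ with hx
    have hadj6 : (cycleGraph 6).Adj (i x) (i x + 1) :=
      cycleGraph6_adj.2 (Or.inr (by simp))
    have hadj : (H.induce c.supp).Adj x (i.symm (i x + 1)) := by
      refine i.map_rel_iff.1 ?_
      rwa [RelIso.apply_symm_apply]
    have hAdj : H.Adj v ((i.symm (i x + 1)) : ↥c.supp).1 := hadj
    refine ⟨s(v, ((i.symm (i x + 1)) : ↥c.supp).1), ⟨?_, ?_⟩, Sym2.mem_mk_left _ _⟩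
    · exact H.mem_edgeSet.2 hAdj
    · intro z hz
      rcases Sym2.mem_iff.1 hz with rfl | rfl
      · exact hv
      · exact (i.symm (i x + 1)).2

lemma isHexagon_compEdges_s6 (hle : H ≤ G) (hc : IsHexComp H c) :
    IsHexagon G (compEdges H c) := by
  obtain ⟨i⟩ := hc
  refine ⟨fun j => ((i.symm j : ↥c.supp) : V), ⟨?_, ?_⟩, ?_⟩
  · intro a b h
    exact i.symm.toEquiv.injective (Subtype.ext h)
  · intro j
    have h6 : (cycleGraph 6).Adj j (j + 1) := cycleGraph6_adj.2 (Or.inr (by simp))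
    have : (H.induce c.supp).Adj (i.symm j) (i.symm (j + 1)) := i.symm.map_rel_iff'.2 h6
    exact hle this
  · ext e
    simp only [hexEdges, compEdges, Set.mem_setOf_eq]
    induction e using Sym2.ind with
    | _ u v =>
      constructor
      · rintro ⟨he, hmem⟩
        have hu : u ∈ c.supp := hmem u (Sym2.mem_mk_left _ _)
        have hv : v ∈ c.supp := hmem v (Sym2.mem_mk_right _ _)
        have hadj : (H.induce c.supp).Adj ⟨u, hu⟩ ⟨v, hv⟩ := H.mem_edgeSet.1 he
        have h6 : (cycleGraph 6).Adj (i ⟨u, hu⟩) (i ⟨v, hv⟩) := i.map_rel_iff'.2 hadj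
        rcases cycleGraph6_adj.1 h6 with h | h
        · refine ⟨i ⟨v, hv⟩, ?_⟩
          have h1 : i ⟨u, hu⟩ = i ⟨v, hv⟩ + 1 := by
            rw [sub_eq_iff_eq_add] at h
            rw [h, add_comm]
          rw [← h1, RelIso.symm_apply_apply, RelIso.symm_apply_apply, Sym2.eq_swap]
        · refine ⟨i ⟨u, hu⟩, ?_⟩
          have h1 : i ⟨v, hv⟩ = i ⟨u, hu⟩ + 1 := by
            rw [sub_eq_iff_eq_add] at h
            rw [h, add_comm]
          rw [← h1, RelIso.symm_apply_apply, RelIso.symm_apply_apply]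
      · rintro ⟨j, hj⟩
        rw [hj]
        have h6 : (cycleGraph 6).Adj j (j + 1) := cycleGraph6_adj.2 (Or.inr (by simp))
        have hadj : (H.induce c.supp).Adj (i.symm j) (i.symm (j + 1)) := i.symm.map_rel_iff'.2 h6
        refine ⟨H.mem_edgeSet.2 hadj, ?_⟩
        intro z hz
        rcases Sym2.mem_iff.1 hz with rfl | rfl
        · exact (i.symm j).2
        · exact (i.symm (j + 1)).2

end HexComp


/-! ### hexEdges basics -/

section HexEdges

variable {f : Fin 6 → V} {G : SimpleGraph V}

lemma fin6_ne_add_one : ∀ i : Fin 6, i ≠ i + 1 := by decide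

lemma hexEdges_loopless (hinj : Function.Injective f) (v : V) : s(v, v) ∉ hexEdges f := by
  rintro ⟨i, hi⟩
  rw [Sym2.eq_iff] at hi
  rcases hi with ⟨h1, h2⟩ | ⟨h1, h2⟩
  · exact fin6_ne_add_one i (hinj (h1.symm.trans h2))
  · exact fin6_ne_add_one i (hinj (h2.symm.trans h1))

lemma edgeSupp_hexEdges : edgeSupp (hexEdges f) = Set.range f := by
  ext v
  constructor
  · rintro ⟨e, ⟨i, rfl⟩, hv⟩
    rcases Sym2.mem_iff.1 hv with rfl | rfl
    exacts [⟨i, rfl⟩, ⟨i + 1, rfl⟩]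
  · rintro ⟨i, rfl⟩
    exact ⟨s(f i, f (i + 1)), ⟨i, rfl⟩, Sym2.mem_mk_left _ _⟩

lemma mem_hexEdges_iff (hinj : Function.Injective f) {i j : Fin 6} :
    s(f i, f j) ∈ hexEdges f ↔ j = i + 1 ∨ i = j + 1 := by
  constructor
  · rintro ⟨a, ha⟩
    rw [Sym2.eq_iff] at ha
    rcases ha with ⟨h1, h2⟩ | ⟨h1, h2⟩
    · left
      rw [hinj h2, hinj h1]
    · right
      rw [hinj h1, hinj h2]
  · rintro (h | h)
    · subst h; exact ⟨i, rfl⟩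
    · subst h; exact ⟨j, Sym2.eq_swap⟩

end HexEdges

/-! ### Backward construction -/

section Backward

variable {G : SimpleGraph V} {E : Set (Sym2 V)} {f : Fin 6 → V}

/-- the graph obtained by gluing a hexagon onto a graph on the complement -/
def bwd (hhex : IsHexagon G E) (H'' : SimpleGraph ↥{v : V | v ∉ edgeSupp E}) :
    SimpleGraph V where
  Adj u v := s(u, v) ∈ E ∨
    ∃ (hu : u ∉ edgeSupp E) (hv : v ∉ edgeSupp E), H''.Adj ⟨u, hu⟩ ⟨v, hv⟩
  symm := ⟨by
    rintro u v (h | ⟨hu, hv, h⟩)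
    · left; rwa [Sym2.eq_swap]
    · exact Or.inr ⟨hv, hu, h.symm⟩⟩
  loopless := ⟨fun v h => by
    rcases h with h | ⟨hu, hv, h⟩
    · obtain ⟨g, hg, hgE⟩ := hhex
      rw [hgE] at h
      exact hexEdges_loopless hg.1 v h
    · exact H''.irrefl h⟩

variable (hhex : IsHexagon G E) (H'' : SimpleGraph ↥{v : V | v ∉ edgeSupp E})

lemma bwd_le (hle : H'' ≤ G.induce {v : V | v ∉ edgeSupp E}) : bwd hhex H'' ≤ G := by
  obtain ⟨g, hg, rfl⟩ := id hhex
  rintro u v (⟨i, hi⟩ | ⟨hu, hv, h⟩)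
  · rw [Sym2.eq_iff] at hi
    rcases hi with ⟨rfl, rfl⟩ | ⟨rfl, rfl⟩
    · exact hg.2 i
    · exact (hg.2 i).symm
  · exact hle h

lemma bwd_induce : (bwd hhex H'').induce {v : V | v ∉ edgeSupp E} = H'' := by
  ext a b
  constructor
  · rintro (h | ⟨hu, hv, h⟩)
    · exact absurd ⟨_, h, Sym2.mem_mk_left _ _⟩ a.2
    · exact h
  · intro h
    exact Or.inr ⟨a.2, b.2, h⟩

lemma bwd_supp_closed :
    ∀ ⦃u v⦄, (bwd hhex H'').Adj u v → u ∈ edgeSupp E → v ∈ edgeSupp E := by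
  rintro u v (h | ⟨hu, hv, h⟩) hmem
  · exact ⟨_, h, Sym2.mem_mk_right _ _⟩
  · exact absurd hmem hu

variable (hf : IsHexCycle G f) (hfE : E = hexEdges f)

open Fin.NatCast Fin.CommRing in
include hfE in
lemma bwd_reachable (i : Fin 6) : (bwd hhex H'').Reachable (f 0) (f i) := by
  have key : ∀ n : ℕ, (bwd hhex H'').Reachable (f 0) (f (n : Fin 6)) := by
    intro n
    induction n with
    | zero => simpa using Reachable.refl (f 0)
    | succ m ih =>
      have hadj : (bwd hhex H'').Adj (f (m : Fin 6)) (f ((m : Fin 6) + 1)) :=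
        Or.inl (by rw [hfE]; exact ⟨(m : Fin 6), rfl⟩)
      have : ((m + 1 : ℕ) : Fin 6) = (m : Fin 6) + 1 := by push_cast; ring
      rw [this]
      exact ih.trans hadj.reachable
  have := key i.val
  rwa [Fin.cast_val_eq_self] at this

include hfE in
lemma bwd_supp_c0 :
    ((bwd hhex H'').connectedComponentMk (f 0)).supp = edgeSupp E := by
  ext v
  constructor
  · intro hv
    rw [ConnectedComponent.mem_supp_iff, ConnectedComponent.eq] at hv
    obtain ⟨p⟩ := hv.symm
    refine walk_mem_closed (bwd_supp_closed hhex H'') p ?_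
    rw [hfE, edgeSupp_hexEdges]
    exact ⟨0, rfl⟩
  · intro hv
    rw [hfE, edgeSupp_hexEdges] at hv
    obtain ⟨i, rfl⟩ := hv
    rw [ConnectedComponent.mem_supp_iff, ConnectedComponent.eq]
    exact (bwd_reachable hhex H'' hfE i).symm

include hf hfE in
lemma bwd_isHexComp :
    IsHexComp (bwd hhex H'') ((bwd hhex H'').connectedComponentMk (f 0)) := by
  have hrange : Set.range f = ((bwd hhex H'').connectedComponentMk (f 0)).supp := by
    rw [bwd_supp_c0 hhex H'' hfE, hfE, edgeSupp_hexEdges]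
  refine ⟨(RelIso.symm ?_ : _ ≃g cycleGraph 6)⟩
  refine ⟨(Equiv.ofInjective f hf.1).trans (Equiv.setCongr hrange), ?_⟩
  intro a b
  simp only [SimpleGraph.comap_adj, Function.Embedding.coe_subtype]
  have hval : ∀ j : Fin 6,
      ((((Equiv.ofInjective f hf.1).trans (Equiv.setCongr hrange)) j : _) : V) = f j :=
    fun j => rfl
  rw [hval, hval]
  show (bwd hhex H'').Adj (f a) (f b) ↔ _
  constructor
  · rintro (h | ⟨hu, hv, h⟩)
    · apply cycleGraph6_adj.2
      rw [hfE] at h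
      rcases (mem_hexEdges_iff hf.1).1 h with h | h
      · right; rw [h]; simp
      · left; rw [h]; simp
    · exact absurd (by rw [hfE, edgeSupp_hexEdges]; exact ⟨a, rfl⟩) hu
  · intro h
    left
    rw [hfE]
    apply (mem_hexEdges_iff hf.1).2
    rcases cycleGraph6_adj.1 h with h | h
    · right; rw [sub_eq_iff_eq_add] at h; rw [h, add_comm]
    · left; rw [sub_eq_iff_eq_add] at h; rw [h, add_comm]

include hfE in
lemma bwd_compEdges :
    compEdges (bwd hhex H'') ((bwd hhex H'').connectedComponentMk (f 0)) = E := by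
  ext e
  induction e using Sym2.ind with
  | _ u v =>
    constructor
    · rintro ⟨he, hmem⟩
      rcases (he : (bwd hhex H'').Adj u v) with h | ⟨hu, hv, h⟩
      · exact h
      · exact absurd
          (by rw [← bwd_supp_c0 hhex H'' hfE]; exact hmem u (Sym2.mem_mk_left _ _)) hu
    · intro h
      refine ⟨(bwd hhex H'').mem_edgeSet.2 (Or.inl h), ?_⟩
      intro z hz
      rw [bwd_supp_c0 hhex H'' hfE]
      exact ⟨s(u, v), h, hz⟩

include hf hfE in
lemma bwd_hexCount [Finite V] : hexCount (bwd hhex H'') = hexCount H'' + 1 := by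
  have hsplit := hexCount_split ((bwd hhex H'').connectedComponentMk (f 0))
    (bwd_isHexComp hhex H'' hf hfE)
  have hset : Wc ((bwd hhex H'').connectedComponentMk (f 0)) = {v : V | v ∉ edgeSupp E} := by
    ext v
    simp only [Set.mem_setOf_eq]
    rw [bwd_supp_c0 hhex H'' hfE]
  rw [hsplit, hset, bwd_induce]

include hf hfE in
lemma bwd_cover (hcov : IsClarCover (G.induce {v : V | v ∉ edgeSupp E}) H'') :
    IsClarCover G (bwd hhex H'') := by
  refine ⟨bwd_le hhex H'' hcov.1, ?_⟩
  have hset : Wc ((bwd hhex H'').connectedComponentMk (f 0)) = {v : V | v ∉ edgeSupp E} := by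
    ext v
    simp only [Set.mem_setOf_eq]
    rw [bwd_supp_c0 hhex H'' hfE]
  refine cover_of_induce ((bwd hhex H'').connectedComponentMk (f 0))
    (Or.inl (bwd_isHexComp hhex H'' hf hfE)) ?_
  rw [hset, bwd_induce]
  exact hcov.2

end Backward


@[simp] lemma bwd_adj {G : SimpleGraph V} {E : Set (Sym2 V)} (hhex : IsHexagon G E)
    (H'' : SimpleGraph ↥{v : V | v ∉ edgeSupp E}) (u v : V) :
    (bwd hhex H'').Adj u v ↔ s(u, v) ∈ E ∨
      ∃ (hu : u ∉ edgeSupp E) (hv : v ∉ edgeSupp E), H''.Adj ⟨u, hu⟩ ⟨v, hv⟩ := Iff.rfl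

/-! ### Forward direction lemmas -/

section Forward

variable {G H : SimpleGraph V} {c : H.ConnectedComponent} {E : Set (Sym2 V)}

lemma fwd_set_eq (hc : IsHexComp H c) :
    {v : V | v ∉ edgeSupp (compEdges H c)} = Wc c := by
  ext v
  simp only [Set.mem_setOf_eq]
  rw [edgeSupp_compEdges hc]

lemma fwd_cover (hcov : IsClarCover G H) (hc : IsHexComp H c)
    (hkey : compEdges H c = E) :
    IsClarCover (G.induce {v : V | v ∉ edgeSupp E}) (H.induce {v : V | v ∉ edgeSupp E}) := by
  subst hkey
  refine ⟨induce_le_induce hcov.1 _, ?_⟩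
  rw [fwd_set_eq hc]
  exact cover_induce c hcov.2

lemma fwd_hexCount [Finite V] (hc : IsHexComp H c) (hkey : compEdges H c = E) :
    hexCount H = hexCount (H.induce {v : V | v ∉ edgeSupp E}) + 1 := by
  subst hkey
  rw [fwd_set_eq hc]
  exact hexCount_split c hc

lemma bwd_fwd (hc : IsHexComp H c) (hkey : compEdges H c = E) (hhex : IsHexagon G E) :
    bwd hhex (H.induce {v : V | v ∉ edgeSupp E}) = H := by
  subst hkey
  ext u v
  rw [bwd_adj]
  constructor
  · rintro (h | ⟨hu, hv, h⟩)
    · exact H.mem_edgeSet.1 h.1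
    · exact h
  · intro h
    by_cases hu : u ∈ c.supp
    · left
      refine ⟨H.mem_edgeSet.2 h, ?_⟩
      intro z hz
      rcases Sym2.mem_iff.1 hz with rfl | rfl
      exacts [hu, supp_closed c h hu]
    · right
      have hv : v ∉ c.supp := fun hv => hu (supp_closed c h.symm hv)
      have hu' : u ∉ edgeSupp (compEdges H c) := by
        rw [edgeSupp_compEdges hc]; exact hu
      have hv' : v ∉ edgeSupp (compEdges H c) := by
        rw [edgeSupp_compEdges hc]; exact hv
      exact ⟨hu', hv', h⟩

end Forward

/-! ### The counting identity -/

section Count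

variable {G : SimpleGraph V}

lemma pair_ext {G : SimpleGraph V} {k : ℕ}
    {H₁ H₂ : SimpleGraph V} {h₁ : IsClarCover G H₁ ∧ hexCount H₁ = k}
    {h₂ : IsClarCover G H₂ ∧ hexCount H₂ = k}
    {c₁ : H₁.ConnectedComponent} {c₂ : H₂.ConnectedComponent}
    {q₁ : IsHexComp H₁ c₁} {q₂ : IsHexComp H₂ c₂}
    (hH : H₁ = H₂) {v : V} (hv₁ : v ∈ c₁.supp) (hv₂ : v ∈ c₂.supp) :
    (⟨⟨H₁, h₁⟩, ⟨c₁, q₁⟩⟩ : Σ x : {H : SimpleGraph V // IsClarCover G H ∧ hexCount H = k},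
        {c : x.1.ConnectedComponent // IsHexComp x.1 c}) = ⟨⟨H₂, h₂⟩, ⟨c₂, q₂⟩⟩ := by
  subst hH
  have hc : c₁ = c₂ := by
    rw [ConnectedComponent.mem_supp_iff] at hv₁ hv₂
    rw [← hv₁, hv₂]
  subst hc
  rfl

variable (G) in
/-- pairs of a Clar cover with `k` hexagons together with a chosen hexagon component -/
abbrev PairT (k : ℕ) : Type _ :=
  Σ x : {H : SimpleGraph V // IsClarCover G H ∧ hexCount H = k},
    {c : x.1.ConnectedComponent // IsHexComp x.1 c}

/-- the key equivalence: pairs with key `E` correspond to Clar covers of `G - V(E)` -/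
noncomputable def thetaEquiv [Finite V] (k : ℕ) {E : Set (Sym2 V)} (hhex : IsHexagon G E) :
    {p : PairT G (k + 1) // compEdges p.1.1 p.2.1 = E} ≃
      {H'' : SimpleGraph ↥{v : V | v ∉ edgeSupp E} //
        IsClarCover (G.induce {v : V | v ∉ edgeSupp E}) H'' ∧ hexCount H'' = k} where
  toFun p :=
    ⟨p.1.1.1.induce {v : V | v ∉ edgeSupp E},
      fwd_cover p.1.1.2.1 p.1.2.2 p.2,
      by
        have h1 := fwd_hexCount (E := E) p.1.2.2 p.2
        have h2 := p.1.1.2.2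
        omega⟩
  invFun q :=
    ⟨⟨⟨bwd hhex q.1,
        bwd_cover hhex q.1 hhex.choose_spec.1 hhex.choose_spec.2 q.2.1,
        by rw [bwd_hexCount hhex q.1 hhex.choose_spec.1 hhex.choose_spec.2, q.2.2]⟩,
      ⟨(bwd hhex q.1).connectedComponentMk (hhex.choose 0),
        bwd_isHexComp hhex q.1 hhex.choose_spec.1 hhex.choose_spec.2⟩⟩,
      bwd_compEdges hhex q.1 hhex.choose_spec.2⟩
  left_inv p := by
    obtain ⟨⟨⟨H, hH⟩, ⟨c, hc⟩⟩, hkey⟩ := p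
    apply Subtype.ext
    set f0 : Fin 6 → V := hhex.choose with hf0
    have hsp : IsHexCycle G f0 ∧ E = hexEdges f0 := hhex.choose_spec
    refine pair_ext (v := f0 0) (bwd_fwd hc hkey hhex) ?_ ?_
    · exact ConnectedComponent.connectedComponentMk_mem
    · have h0 : f0 0 ∈ edgeSupp E := by
        rw [hsp.2, edgeSupp_hexEdges]
        exact ⟨0, rfl⟩
      rw [← hkey, edgeSupp_compEdges hc] at h0
      exact h0
  right_inv q := Subtype.ext (bwd_induce hhex q.1)

lemma nat_card_sigma {ι : Type*} [Fintype ι] (B : ι → Type*) [∀ i, Finite (B i)] :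
    Nat.card (Σ i, B i) = ∑ i, Nat.card (B i) := by
  letI : ∀ i, Fintype (B i) := fun i => Fintype.ofFinite _
  simp [Nat.card_eq_fintype_card]

lemma count_identity [Fintype V] (G : SimpleGraph V) (k : ℕ) :
    (k + 1) * clarCount G (k + 1) =
      ∑ᶠ E ∈ {E : Set (Sym2 V) | IsHexagon G E},
        clarCount (G.induce {v : V | v ∉ edgeSupp E}) k := by
  classical
  have hfin : {E : Set (Sym2 V) | IsHexagon G E}.Finite := Set.toFinite _
  rw [← hfin.coe_toFinset, finsum_mem_coe_finset]
  letI : Fintype {H : SimpleGraph V // IsClarCover G H ∧ hexCount H = k + 1} :=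
    Fintype.ofFinite _
  have hA : Nat.card (PairT G (k + 1)) = clarCount G (k + 1) * (k + 1) := by
    rw [nat_card_sigma]
    rw [Finset.sum_congr rfl (fun x _ =>
      (show Nat.card {c : x.1.ConnectedComponent // IsHexComp x.1 c} = k + 1 from x.2.2))]
    rw [Finset.sum_const, smul_eq_mul]
    congr 1
    rw [Finset.card_univ, clarCount, Nat.card_eq_fintype_card]
  have hB : Nat.card (PairT G (k + 1)) =
      ∑ E ∈ hfin.toFinset, clarCount (G.induce {v : V | v ∉ edgeSupp E}) k := by
    letI : Fintype ↥{E : Set (Sym2 V) | IsHexagon G E} := Fintype.ofFinite _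
    have e1 : PairT G (k + 1) ≃
        Σ E : ↥{E : Set (Sym2 V) | IsHexagon G E},
          {p : PairT G (k + 1) //
            (⟨compEdges p.1.1 p.2.1, isHexagon_compEdges_s6 p.1.2.1.1 p.2.2⟩ :
              ↥{E : Set (Sym2 V) | IsHexagon G E}) = E} :=
      (Equiv.sigmaFiberEquiv _).symm
    rw [Nat.card_congr e1, nat_card_sigma]
    have e2 : ∀ E : ↥{E : Set (Sym2 V) | IsHexagon G E},
        Nat.card {p : PairT G (k + 1) //
            (⟨compEdges p.1.1 p.2.1, isHexagon_compEdges_s6 p.1.2.1.1 p.2.2⟩ :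
              ↥{E : Set (Sym2 V) | IsHexagon G E}) = E} =
          clarCount (G.induce {v : V | v ∉ edgeSupp E.1}) k := by
      intro E
      have heq : {p : PairT G (k + 1) //
            (⟨compEdges p.1.1 p.2.1, isHexagon_compEdges_s6 p.1.2.1.1 p.2.2⟩ :
              ↥{E : Set (Sym2 V) | IsHexagon G E}) = E} ≃
          {p : PairT G (k + 1) // compEdges p.1.1 p.2.1 = E.1} :=
        Equiv.subtypeEquivRight (fun p =>
          ⟨fun h => congrArg Subtype.val h, fun h => Subtype.ext h⟩)
      rw [Nat.card_congr (heq.trans (thetaEquiv k E.2))]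
      rfl
    rw [Finset.sum_congr rfl (fun E _ => e2 E)]
    rw [← Finset.sum_coe_sort hfin.toFinset]
    refine Fintype.sum_equiv (Equiv.subtypeEquivRight ?_) _ _ (fun x => rfl)
    intro x
    simp [Set.Finite.mem_toFinset]
  rw [← hB, hA, mul_comm]

end Count




/-! ### Vanishing and the core derivative identity -/

section Core

variable {G : SimpleGraph V}

lemma hexCount_le [Finite V] (H : SimpleGraph V) : hexCount H ≤ Nat.card V := by
  have h1 : hexCount H ≤ Nat.card H.ConnectedComponent :=
    Nat.card_le_card_of_injective Subtype.val Subtype.val_injective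
  have h2 : Nat.card H.ConnectedComponent ≤ Nat.card V :=
    Nat.card_le_card_of_surjective H.connectedComponentMk
      (fun c => c.exists_rep)
  exact h1.trans h2

lemma clarCount_eq_zero [Finite V] {k : ℕ} (h : Nat.card V < k) : clarCount G k = 0 := by
  rw [clarCount, Nat.card_eq_zero]
  refine Or.inl ⟨?_⟩
  rintro ⟨H, hH, hk⟩
  exact absurd (hk ▸ hexCount_le H) (by omega)

lemma clarPoly_eq_sum_range [Finite V] {n : ℕ} (hn : Nat.card V < n) :
    clarPoly G = ∑ k ∈ Finset.range n, Polynomial.C (clarCount G k : ℤ) * Polynomial.X ^ k := by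
  rw [clarPoly]
  apply Finset.sum_subset (Finset.range_subset_range.2 (by omega))
  intro x _ hnx
  rw [clarCount_eq_zero (by simp at hnx; omega)]
  simp

lemma card_compl_lt [Fintype V] {E : Set (Sym2 V)} (hhex : IsHexagon G E) :
    Nat.card ↥{v : V | v ∉ edgeSupp E} < Nat.card V := by
  classical
  obtain ⟨f, hf, rfl⟩ := hhex
  have h0 : f 0 ∈ edgeSupp (hexEdges f) := by
    rw [edgeSupp_hexEdges]; exact ⟨0, rfl⟩
  rw [Nat.card_eq_fintype_card, Nat.card_eq_fintype_card]
  exact Fintype.card_subtype_lt (x := f 0) (by simpa using h0)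

lemma core_derivative [Fintype V] (G : SimpleGraph V) :
    Polynomial.derivative (clarPoly G) =
      ∑ᶠ E ∈ {E : Set (Sym2 V) | IsHexagon G E},
        clarPoly (G.induce {v : V | v ∉ edgeSupp E}) := by
  classical
  have hfin : {E : Set (Sym2 V) | IsHexagon G E}.Finite := Set.toFinite _
  rw [← hfin.coe_toFinset, finsum_mem_coe_finset]
  have hR : ∀ E ∈ hfin.toFinset, clarPoly (G.induce {v : V | v ∉ edgeSupp E}) =
      ∑ j ∈ Finset.range (Nat.card V),
        Polynomial.C (clarCount (G.induce {v : V | v ∉ edgeSupp E}) j : ℤ) *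
          Polynomial.X ^ j := by
    intro E hE
    have hhex : IsHexagon G E := by rwa [Set.Finite.mem_toFinset] at hE
    exact clarPoly_eq_sum_range (card_compl_lt hhex)
  rw [Finset.sum_congr rfl hR, Finset.sum_comm]
  rw [clarPoly, map_sum]
  rw [Finset.sum_congr rfl (fun k _ => Polynomial.derivative_C_mul_X_pow _ _)]
  rw [Finset.sum_range_succ']
  have hz : (Polynomial.C ((clarCount G 0 : ℤ) * ((0 : ℕ) : ℤ)) *
      Polynomial.X ^ (0 - 1) : Polynomial ℤ) = 0 := by simp
  rw [hz, add_zero]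
  refine Finset.sum_congr rfl (fun j hj => ?_)
  have hcnt := count_identity G j
  rw [← hfin.coe_toFinset, finsum_mem_coe_finset] at hcnt
  have hstep : ∑ E ∈ hfin.toFinset,
      Polynomial.C ((clarCount (G.induce {v : V | v ∉ edgeSupp E}) j : ℤ)) * Polynomial.X ^ j
      = Polynomial.C ((((j + 1) * clarCount G (j + 1) : ℕ)) : ℤ) * Polynomial.X ^ j := by
    rw [← Finset.sum_mul, ← map_sum]
    congr 2
    rw [hcnt]
    push_cast
    rfl
  rw [hstep]
  have hexp : j + 1 - 1 = j := by omega
  rw [hexp]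
  congr 1
  push_cast
  ring

end Core


/-! ### Hexagons of induced subgraphs -/

section InduceHex

variable {G : SimpleGraph V} {W : Set V}

/-- double induce is an induced subgraph on the image -/
def induceInduceIso (G : SimpleGraph V) (W : Set V) (U : Set ↥W) :
    (G.induce W).induce U ≃g G.induce (Subtype.val '' U) where
  toEquiv :=
    { toFun := fun x => ⟨x.1.1, ⟨x.1, x.2, rfl⟩⟩
      invFun := fun y =>
        ⟨⟨y.1, (mem_val_image y.2).choose⟩, (mem_val_image y.2).choose_spec⟩
      left_inv := fun x => Subtype.ext (Subtype.ext rfl)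
      right_inv := fun y => Subtype.ext rfl }
  map_rel_iff' := Iff.rfl

lemma clarPoly_induce_induce (G : SimpleGraph V) (W : Set V) (U : Set ↥W) :
    clarPoly ((G.induce W).induce U) = clarPoly (G.induce (Subtype.val '' U)) :=
  clarPoly_congr (induceInduceIso G W U)

lemma edgeSupp_map (g : V → V₂) (A : Set (Sym2 V)) :
    edgeSupp (Sym2.map g '' A) = g '' edgeSupp A := by
  ext v
  constructor
  · rintro ⟨e, ⟨e', he', rfl⟩, hv⟩
    obtain ⟨a, ha, rfl⟩ := Sym2.mem_map.1 hv
    exact ⟨a, ⟨e', he', ha⟩, rfl⟩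
  · rintro ⟨a, ⟨e', he', ha⟩, rfl⟩
    exact ⟨Sym2.map g e', ⟨e', he', rfl⟩, Sym2.mem_map.2 ⟨a, ha, rfl⟩⟩

lemma hexEdges_comp (g : V → V₂) (f : Fin 6 → V) :
    Sym2.map g '' hexEdges f = hexEdges (g ∘ f) := by
  ext e
  constructor
  · rintro ⟨e', ⟨i, rfl⟩, rfl⟩
    exact ⟨i, by rw [Sym2.map_pair_eq]; rfl⟩
  · rintro ⟨i, rfl⟩
    exact ⟨s(f i, f (i + 1)), ⟨i, rfl⟩, by rw [Sym2.map_pair_eq]; rfl⟩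

lemma isHexagon_map {E' : Set (Sym2 ↥W)} (h : IsHexagon (G.induce W) E') :
    IsHexagon G (Sym2.map Subtype.val '' E') := by
  obtain ⟨f', hf', rfl⟩ := h
  refine ⟨Subtype.val ∘ f', ⟨?_, ?_⟩, (hexEdges_comp _ _)⟩
  · exact Subtype.val_injective.comp hf'.1
  · exact fun i => hf'.2 i

lemma isHexagon_of_subset {E : Set (Sym2 V)} (h : IsHexagon G E)
    (hsub : edgeSupp E ⊆ W) :
    ∃ E' : Set (Sym2 ↥W), IsHexagon (G.induce W) E' ∧ Sym2.map Subtype.val '' E' = E := by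
  obtain ⟨f, hf, rfl⟩ := h
  have hmem : ∀ i : Fin 6, f i ∈ W := by
    intro i
    apply hsub
    rw [edgeSupp_hexEdges]
    exact ⟨i, rfl⟩
  refine ⟨hexEdges (fun i => ⟨f i, hmem i⟩), ⟨fun i => ⟨f i, hmem i⟩, ⟨?_, ?_⟩, rfl⟩, ?_⟩
  · intro a b hab
    exact hf.1 (congrArg Subtype.val hab)
  · exact fun i => hf.2 i
  · rw [hexEdges_comp]
    rfl

lemma val_image_compl_edgeSupp (E' : Set (Sym2 ↥W)) :
    Subtype.val '' {x : ↥W | x ∉ edgeSupp E'} =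
      W ∩ {v : V | v ∉ edgeSupp (Sym2.map Subtype.val '' E')} := by
  rw [edgeSupp_map]
  ext v
  constructor
  · rintro ⟨x, hx, rfl⟩
    refine ⟨x.2, ?_⟩
    rintro ⟨y, hy, hyx⟩
    exact hx (Subtype.val_injective hyx ▸ hy)
  · rintro ⟨hvW, hv⟩
    exact ⟨⟨v, hvW⟩, fun hmem => hv ⟨⟨v, hvW⟩, hmem, rfl⟩, rfl⟩

/-- reindexing of the core sum over hexagons of an induced subgraph -/
lemma reindex_core (G : SimpleGraph V) (W : Set V) :
    (∑ᶠ E' ∈ {E' : Set (Sym2 ↥W) | IsHexagon (G.induce W) E'},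
        clarPoly ((G.induce W).induce {x : ↥W | x ∉ edgeSupp E'})) =
      ∑ᶠ E ∈ {E : Set (Sym2 V) | IsHexagon G E ∧ edgeSupp E ⊆ W},
        clarPoly (G.induce (W ∩ {v : V | v ∉ edgeSupp E})) := by
  have himg : {E : Set (Sym2 V) | IsHexagon G E ∧ edgeSupp E ⊆ W} =
      (fun E' : Set (Sym2 ↥W) => Sym2.map Subtype.val '' E') ''
        {E' : Set (Sym2 ↥W) | IsHexagon (G.induce W) E'} := by
    ext E
    constructor
    · rintro ⟨h1, h2⟩
      obtain ⟨E', hE', rfl⟩ := isHexagon_of_subset h1 h2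
      exact ⟨E', hE', rfl⟩
    · rintro ⟨E', hE', rfl⟩
      refine ⟨isHexagon_map hE', ?_⟩
      rw [edgeSupp_map]
      rintro v ⟨x, hx, rfl⟩
      exact x.2
  rw [himg, finsum_mem_image]
  · apply finsum_mem_congr rfl
    intro E' hE'
    rw [clarPoly_induce_induce, val_image_compl_edgeSupp]
  · intro a _ b _ h
    exact Set.image_injective.2 (Sym2.map.injective Subtype.val_injective) h

end InduceHex


/-! ### The main induction -/

section Main

variable [Fintype V]

/-- sets of `s` pairwise disjoint hexagons -/
abbrev hexSets (G : SimpleGraph V) (s : ℕ) : Set (Set (Set (Sym2 V))) :=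
  {R : Set (Set (Sym2 V)) | (∀ E ∈ R, IsHexagon G E) ∧
    R.Pairwise (fun E F => edgeSupp E ∩ edgeSupp F = ∅) ∧ R.ncard = s}

/-- the vertices avoiding all hexagons of `R` -/
abbrev WR (R : Set (Set (Sym2 V))) : Set V := {v : V | ∀ E ∈ R, v ∉ edgeSupp E}

lemma hex_supp_nonempty {G : SimpleGraph V} {E : Set (Sym2 V)} (h : IsHexagon G E) :
    (edgeSupp E).Nonempty := by
  obtain ⟨f, hf, rfl⟩ := h
  rw [edgeSupp_hexEdges]
  exact ⟨f 0, 0, rfl⟩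

lemma WR_insert (E : Set (Sym2 V)) (R : Set (Set (Sym2 V))) :
    WR R ∩ {v : V | v ∉ edgeSupp E} = WR (insert E R) := by
  ext v
  simp only [Set.mem_inter_iff, Set.mem_setOf_eq, Set.mem_insert_iff, forall_eq_or_imp]
  tauto

lemma main_induction (G : SimpleGraph V) : ∀ s : ℕ, 1 ≤ s →
    (⇑(Polynomial.derivative (R := ℤ)))^[s] (clarPoly G) =
      (s.factorial : ℤ) • ∑ᶠ R ∈ hexSets G s, clarPoly (G.induce (WR R)) := by
  intro s hs
  induction s, hs using Nat.le_induction with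
  | base =>
    rw [Function.iterate_one, core_derivative]
    simp only [Nat.factorial_one, Nat.cast_one, one_smul]
    have himg : hexSets G 1 =
        (fun E : Set (Sym2 V) => ({E} : Set (Set (Sym2 V)))) ''
          {E : Set (Sym2 V) | IsHexagon G E} := by
      ext R
      constructor
      · rintro ⟨hhex, hpw, hcard⟩
        obtain ⟨E, rfl⟩ := Set.ncard_eq_one.1 hcard
        exact ⟨E, hhex E rfl, rfl⟩
      · rintro ⟨E, hE, rfl⟩
        refine ⟨by simpa using hE, Set.pairwise_singleton _ _, Set.ncard_singleton E⟩
    rw [himg, finsum_mem_image]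
    · apply finsum_mem_congr rfl
      intro E hE
      have hset : {v : V | v ∉ edgeSupp E} = WR {E} := by
        ext v; simp [WR]
      rw [hset]
    · intro a _ b _ h
      simpa using h
  | succ s hs ih =>
    classical
    rw [Function.iterate_succ_apply', ih, Polynomial.derivative_smul]
    have hfinS : (hexSets G s).Finite := Set.toFinite _
    have hfinS' : (hexSets G (s + 1)).Finite := Set.toFinite _
    have hfinB : ∀ R : Set (Set (Sym2 V)),
        ({E : Set (Sym2 V) | IsHexagon G E ∧ edgeSupp E ⊆ WR R}).Finite :=
      fun R => Set.toFinite _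
    rw [← hfinS.coe_toFinset, finsum_mem_coe_finset, map_sum]
    have hcore : ∀ R ∈ hfinS.toFinset,
        Polynomial.derivative (clarPoly (G.induce (WR R))) =
          ∑ E ∈ (hfinB R).toFinset, clarPoly (G.induce (WR (insert E R))) := by
      intro R _
      rw [core_derivative (G.induce (WR R)), reindex_core G (WR R)]
      rw [← finsum_mem_coe_finset, Set.Finite.coe_toFinset]
      apply finsum_mem_congr rfl
      intro E _
      rw [WR_insert]
    rw [Finset.sum_congr rfl hcore]
    -- double sum reindexing
    have hdouble :
        (∑ R ∈ hfinS.toFinset, ∑ E ∈ (hfinB R).toFinset,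
          clarPoly (G.induce (WR (insert E R)))) =
        ∑ R' ∈ hfinS'.toFinset, ∑ E ∈ (Set.toFinite R').toFinset,
          clarPoly (G.induce (WR R')) := by
      rw [Finset.sum_sigma', Finset.sum_sigma']
      refine Finset.sum_nbij' (fun p => ⟨insert p.2 p.1, p.2⟩) (fun p => ⟨p.1 \ {p.2}, p.2⟩)
        ?_ ?_ ?_ ?_ ?_
      · rintro ⟨R, E⟩ hp
        rw [Finset.mem_sigma, Set.Finite.mem_toFinset, Set.Finite.mem_toFinset] at hp
        obtain ⟨⟨hhex, hpw, hcard⟩, hE, hsub⟩ := hp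
        have hER : E ∉ R := by
          intro hmem
          obtain ⟨v, hv⟩ := hex_supp_nonempty hE
          exact hsub hv E hmem hv
        rw [Finset.mem_sigma, Set.Finite.mem_toFinset, Set.Finite.mem_toFinset]
        refine ⟨⟨?_, ?_, ?_⟩, Set.mem_insert _ _⟩
        · rintro F (rfl | hF)
          exacts [hE, hhex F hF]
        · refine Set.Pairwise.insert hpw ?_
          intro F hF hne
          have hdis : edgeSupp E ∩ edgeSupp F = ∅ := by
            ext v
            simp only [Set.mem_inter_iff, Set.mem_empty_iff_false, iff_false, not_and]
            intro hvE hvF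
            exact hsub hvE F hF hvF
          constructor
          · exact hdis
          · rw [Set.inter_comm]; exact hdis
        · rw [Set.ncard_insert_of_notMem hER (Set.toFinite R), hcard]
      · rintro ⟨R', E⟩ hp
        rw [Finset.mem_sigma, Set.Finite.mem_toFinset, Set.Finite.mem_toFinset] at hp
        obtain ⟨⟨hhex, hpw, hcard⟩, hE⟩ := hp
        rw [Finset.mem_sigma, Set.Finite.mem_toFinset, Set.Finite.mem_toFinset]
        refine ⟨⟨?_, ?_, ?_⟩, hhex E hE, ?_⟩
        · exact fun F hF => hhex F hF.1
        · exact hpw.mono Set.diff_subset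
        · rw [Set.ncard_diff_singleton_of_mem hE, hcard]
          omega
        · intro v hv F hF hvF
          have hne : E ≠ F := fun h => hF.2 (by simp [h.symm])
          have hdis := hpw hE hF.1 hne
          have hmem : v ∈ edgeSupp E ∩ edgeSupp F := ⟨hv, hvF⟩
          rw [hdis] at hmem
          exact hmem
      · rintro ⟨R, E⟩ hp
        rw [Finset.mem_sigma, Set.Finite.mem_toFinset, Set.Finite.mem_toFinset] at hp
        obtain ⟨⟨hhex, hpw, hcard⟩, hE, hsub⟩ := hp
        have hER : E ∉ R := by
          intro hmem
          obtain ⟨v, hv⟩ := hex_supp_nonempty hE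
          exact hsub hv E hmem hv
        have h1 : insert E R \ {E} = R := Set.insert_diff_self_of_notMem hER
        show (⟨insert E R \ {E}, E⟩ : Σ _ : Set (Set (Sym2 V)), Set (Sym2 V)) = ⟨R, E⟩
        rw [h1]
      · rintro ⟨R', E⟩ hp
        rw [Finset.mem_sigma, Set.Finite.mem_toFinset, Set.Finite.mem_toFinset] at hp
        have h1 : insert E (R' \ {E}) = R' := by
          rw [Set.insert_diff_singleton, Set.insert_eq_self.2 hp.2]
        show (⟨insert E (R' \ {E}), E⟩ : Σ _ : Set (Set (Sym2 V)), Set (Sym2 V)) = ⟨R', E⟩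
        rw [h1]
      · intro a _
        rfl
    rw [hdouble]
    have hconst : ∀ R' ∈ hfinS'.toFinset, (∑ _E ∈ (Set.toFinite R').toFinset,
        clarPoly (G.induce (WR R'))) = (s + 1) • clarPoly (G.induce (WR R')) := by
      intro R' hR'
      rw [Finset.sum_const]
      congr 1
      rw [← Set.ncard_eq_toFinset_card _ (Set.toFinite R')]
      exact ((Set.Finite.mem_toFinset _).1 hR').2.2
    rw [Finset.sum_congr rfl hconst, ← Finset.smul_sum]
    rw [← finsum_mem_coe_finset, hfinS'.coe_toFinset]
    rw [← natCast_zsmul (∑ᶠ R ∈ hexSets G (s + 1), clarPoly (G.induce (WR R))) (s + 1)]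
    rw [smul_smul]
    congr 1
    push_cast [Nat.factorial_succ]
    ring

end Main

end ClarAux

/-- For a finite simple graph `G` and a positive integer `s`,
the `s`-th derivative of the Clar covering polynomial of `G` satisfies
`ζ⁽ˢ⁾(G,x) = s! · Σ_R ζ(G − V(R), x)`, the sum running over all `s`-element
sets `R` of pairwise vertex-disjoint 6-cycles of `G` (given by their edge
sets). -/
theorem clarPoly_iterated_derivative {V : Type*} [Fintype V] (G : SimpleGraph V)
    (s : ℕ) (hs : 0 < s) :
    (⇑(Polynomial.derivative (R := ℤ)))^[s] (clarPoly G) =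
      (s.factorial : ℤ) •
        ∑ᶠ R ∈ {R : Set (Set (Sym2 V)) | (∀ E ∈ R, IsHexagon G E) ∧
            R.Pairwise (fun E F => edgeSupp E ∩ edgeSupp F = ∅) ∧ R.ncard = s},
          clarPoly (G.induce {v : V | ∀ E ∈ R, v ∉ edgeSupp E}) := by
  exact ClarAux.main_induction G s hs
end
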